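/- arXiv:2104.13753 — 4 statements merged into one kernel-verified Lean document; each statement's English description precedes it below -/
import Mathlib

section
/- Let μ be a nonzero finite Borel measure on ℝ^d with compact support. Then R(μ)/μ(ℝ^d) ≤ λ₁(μ) ≤ diam(supp μ)/μ(ℝ^d), where R(μ) := esssup_{x∼μ} |x − C_μ(ℝ^d)| and diam denotes the Euclidean diameter. -/
open MeasureTheory Filter Topology ProbabilityTheory
open scoped ENNReal NNReal symmDiff Classical RealInnerProductSpace

noncomputable section

/-- `d`-dimensional Euclidean space. -/
abbrev Euc (d : ℕ) : Type := EuclideanSpace ℝ (Fin d)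

/-- The sum-of-norms clustering functional
`J_{μ,λ}(u) = ∫ |u x - x|² dμ + λ ∬ |u x - u y| dμ dμ`. -/
def SONJ {d : ℕ} (μ : Measure (Euc d)) (lam : ℝ) (u : Euc d → Euc d) : ℝ :=
  ∫ x, ‖u x - x‖ ^ 2 ∂μ + lam * ∫ x, ∫ y, ‖u x - u y‖ ∂μ ∂μ

/-- `u` is a minimizer of `J_{μ,λ}` over `L²(μ; ℝ^d)`.  Since `J_{μ,λ}` has a unique
minimizer (up to `μ`-a.e. equality), this predicate characterizes `u_{μ,λ}`. -/
def IsSONMin {d : ℕ} (μ : Measure (Euc d)) (lam : ℝ) (u : Euc d → Euc d) : Prop :=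
  MemLp u 2 μ ∧ ∀ v : Euc d → Euc d, MemLp v 2 μ → SONJ μ lam u ≤ SONJ μ lam v

/-- `μ` is `λ`-cohesive: the minimizer of `J_{μ,λ}` is `μ`-a.e. constant. -/
def Cohesive {d : ℕ} (μ : Measure (Euc d)) (lam : ℝ) : Prop :=
  ∃ u : Euc d → Euc d, IsSONMin μ lam u ∧ ∃ c : Euc d, u =ᵐ[μ] fun _ => c

/-- `μ` is `λ`-shattered: the minimizer of `J_{μ,λ}` agrees `μ`-a.e. with a measurable
injection. -/
def Shattered {d : ℕ} (μ : Measure (Euc d)) (lam : ℝ) : Prop :=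
  ∃ u : Euc d → Euc d, IsSONMin μ lam u ∧
    ∃ v : Euc d → Euc d, Measurable v ∧ Function.Injective v ∧ u =ᵐ[μ] v

/-- `λ₁(μ) = inf {λ ≥ 0 | μ is λ-cohesive}`. -/
def lambda1 {d : ℕ} (μ : Measure (Euc d)) : ℝ :=
  sInf {lam : ℝ | 0 ≤ lam ∧ Cohesive μ lam}

/-- `λ⋆(μ) = sup {λ ≥ 0 | μ is λ-shattered}`. -/
def lambdaStar {d : ℕ} (μ : Measure (Euc d)) : ℝ :=
  sSup {lam : ℝ | 0 ≤ lam ∧ Shattered μ lam}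

/-- The level set (cluster) of `u` containing `x`: `V_{u,x} = u⁻¹({u x})`. -/
def Vset {d : ℕ} (u : Euc d → Euc d) (x : Euc d) : Set (Euc d) := {y | u y = u x}

/-- The `μ`-centroid of a set `V`: the `μ`-average of `V` if `μ V > 0`, and the unique
element of `V` if `V` is a singleton (otherwise junk). -/
def muCentroid {d : ℕ} (μ : Measure (Euc d)) (V : Set (Euc d)) : Euc d :=
  if 0 < μ V then (μ V).toReal⁻¹ • ∫ x in V, x ∂μ
  else if h : ∃ x, V = {x} then h.choose else 0

/-- The first canonical basis vector of `ℝ^d`. -/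
def e1 (d : ℕ) : Euc d := if h : 0 < d then EuclideanSpace.single (⟨0, h⟩ : Fin d) 1 else 0

/-- The constant `γ_d` from the paper. -/
def gammaD (d : ℕ) : ℝ :=
  ((2 * (d : ℝ) + 1) / (2 * (d : ℝ) + 4)) *
    (if Even d then
      (((d : ℝ) + 1) * ((Nat.factorial (2 * d) : ℝ)) * Real.pi) /
        (2 ^ (3 * d) * ((Nat.factorial (d / 2) : ℝ)) ^ 2 * ((Nat.factorial d : ℝ)))
    else
      (((d : ℝ) + 1) * ((Nat.factorial ((d - 1) / 2) : ℝ)) ^ 2 *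
          ((Nat.factorial (2 * d) : ℝ))) /
        (2 ^ d * ((Nat.factorial d : ℝ)) ^ 3))

/-- The union of the two open unit balls centered at `± r e₁`. -/
def ballUnion (d : ℕ) (r : ℝ) : Set (Euc d) :=
  Metric.ball (-(r • e1 d)) 1 ∪ Metric.ball (r • e1 d) 1

/-- The empirical measure `μ_N = N⁻¹ ∑_{n<N} δ_{X n ω}`. -/
def empMeas {d : ℕ} {Ω : Type*} (X : ℕ → Ω → Euc d) (N : ℕ) (ω : Ω) : Measure (Euc d) :=
  (N : ℝ≥0∞)⁻¹ • ∑ n ∈ Finset.range N, Measure.dirac (X n ω)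

/-- The (topological) support of a measure: points all of whose open neighborhoods have
positive measure. -/
def measSupp {d : ℕ} (μ : Measure (Euc d)) : Set (Euc d) :=
  {x | ∀ U : Set (Euc d), IsOpen U → x ∈ U → 0 < μ U}

namespace Scratch

variable {d : ℕ} {μ : Measure (Euc d)} [IsFiniteMeasure μ]

lemma suppNull : μ (measSupp μ)ᶜ = 0 := by
  obtain ⟨B, hBc, -, hB⟩ := TopologicalSpace.exists_countable_basis (Euc d)
  set S : Set (Set (Euc d)) := {U ∈ B | μ U = 0} with hS
  have hsub : (measSupp μ)ᶜ ⊆ ⋃₀ S := by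
    intro x hx
    simp only [Set.mem_compl_iff, measSupp, Set.mem_setOf_eq, not_forall] at hx
    obtain ⟨U, hU, hxU, hμU⟩ := hx
    have hμU : μ U = 0 := by simpa using hμU
    obtain ⟨V, hVB, hxV, hVU⟩ := hB.mem_nhds_iff.mp (hU.mem_nhds hxU)
    exact ⟨V, ⟨hVB, measure_mono_null hVU hμU⟩, hxV⟩
  refine measure_mono_null hsub ?_
  exact (measure_sUnion_null_iff (hBc.mono (Set.sep_subset _ _))).mpr (fun U hU => hU.2)

omit [IsFiniteMeasure μ] in
lemma suppSub {K : Set (Euc d)} (hK : IsCompact K) (h0 : μ Kᶜ = 0) : measSupp μ ⊆ K := by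
  intro x hx
  by_contra hxK
  have := hx Kᶜ hK.isClosed.isOpen_compl hxK
  simp [h0] at this

lemma ae_mem_supp : ∀ᵐ x ∂μ, x ∈ measSupp μ :=
  (ae_iff.mpr (by exact (suppNull (μ := μ))))


lemma ae_bound (hsupp : ∃ K : Set (Euc d), IsCompact K ∧ μ Kᶜ = 0) :
    ∃ C : ℝ, 0 ≤ C ∧ ∀ᵐ x ∂μ, ‖x‖ ≤ C := by
  obtain ⟨K, hK, hK0⟩ := hsupp
  obtain ⟨C, hC⟩ := hK.isBounded.exists_norm_le
  refine ⟨max C 0, le_max_right _ _, ?_⟩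
  have : ∀ᵐ x ∂μ, x ∈ K := (ae_iff.mpr (by exact hK0))
  filter_upwards [this] with x hx
  exact (hC x hx).trans (le_max_left _ _)

lemma memL2_id {C : ℝ} (hC : ∀ᵐ x ∂μ, ‖x‖ ≤ C) : MemLp (fun x : Euc d => x) 2 μ :=
  MemLp.of_bound aestronglyMeasurable_id C hC

lemma int_id {C : ℝ} (hC : ∀ᵐ x ∂μ, ‖x‖ ≤ C) : Integrable (fun x : Euc d => x) μ :=
  (memL2_id hC).integrable one_le_two

lemma ae_fst {p : Euc d → Prop} (h : ∀ᵐ x ∂μ, p x) : ∀ᵐ z ∂(μ.prod μ), p z.1 :=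
  Measure.quasiMeasurePreserving_fst.tendsto_ae.eventually h

lemma ae_snd {p : Euc d → Prop} (h : ∀ᵐ x ∂μ, p x) : ∀ᵐ z ∂(μ.prod μ), p z.2 :=
  Measure.quasiMeasurePreserving_snd.tendsto_ae.eventually h

lemma int_fst {f : Euc d → ℝ} (hf : Integrable f μ) :
    Integrable (fun z : Euc d × Euc d => f z.1) (μ.prod μ) := by
  refine (integrable_prod_iff hf.1.comp_fst).mpr ⟨?_, ?_⟩
  · exact Eventually.of_forall fun x => integrable_const (f x)
  · simpa [mul_comm] using hf.norm.mul_const (μ.real Set.univ)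

lemma int_snd {f : Euc d → ℝ} (hf : Integrable f μ) :
    Integrable (fun z : Euc d × Euc d => f z.2) (μ.prod μ) := by
  refine (integrable_prod_iff hf.1.comp_snd).mpr ⟨?_, ?_⟩
  · exact Eventually.of_forall fun _ => hf
  · simpa using integrable_const (E := ℝ) (μ := μ) ‖∫ y, ‖f y‖ ∂μ‖

lemma expand {C : ℝ} (hC : ∀ᵐ x ∂μ, ‖x‖ ≤ C) {v : Euc d → Euc d} (hv : MemLp v 2 μ)
    (c : Euc d) :
    ∫ x, ‖v x - x‖ ^ 2 ∂μ =
      ∫ x, ‖v x - c‖ ^ 2 ∂μ - 2 * ∫ x, ⟪v x - c, x - c⟫ ∂μ + ∫ x, ‖x - c‖ ^ 2 ∂μ := by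
  set φ : Euc d → Euc d := fun x => v x - c with hφdef
  have hφ : MemLp φ 2 μ := hv.sub (memLp_const c)
  have hψ : MemLp (fun x : Euc d => x - c) 2 μ := (memL2_id hC).sub (memLp_const c)
  have I1 : Integrable (fun x => ‖φ x‖ ^ 2) μ := (memLp_two_iff_integrable_sq_norm hφ.1).mp hφ
  have I3 : Integrable (fun x => ‖x - c‖ ^ 2) μ := (memLp_two_iff_integrable_sq_norm hψ.1).mp hψ
  have I2 : Integrable (fun x => ⟪φ x, x - c⟫) μ := by
    refine Integrable.mono' (((hφ.integrable one_le_two).norm.const_mul (C + ‖c‖)))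
      (hφ.1.inner (aestronglyMeasurable_id.sub aestronglyMeasurable_const)) ?_
    filter_upwards [hC] with x hx
    calc ‖⟪φ x, x - c⟫‖ ≤ ‖φ x‖ * ‖x - c‖ := norm_inner_le_norm _ _
      _ ≤ ‖φ x‖ * (C + ‖c‖) := by
          refine mul_le_mul_of_nonneg_left ((norm_sub_le _ _).trans ?_) (norm_nonneg _)
          exact add_le_add_left hx _
      _ = (C + ‖c‖) * ‖φ x‖ := mul_comm _ _
  calc ∫ x, ‖v x - x‖ ^ 2 ∂μ
      = ∫ x, (‖φ x‖ ^ 2 - 2 * ⟪φ x, x - c⟫ + ‖x - c‖ ^ 2) ∂μ := by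
        refine integral_congr_ae (Eventually.of_forall fun x => ?_)
        simp only
        rw [show v x - x = φ x - (x - c) by simp only [hφdef]; abel, norm_sub_sq_real]
    _ = _ := by
        have h2 : Integrable (fun x => 2 * ⟪φ x, x - c⟫) μ := I2.const_mul 2
        have h12 : Integrable (fun x => ‖φ x‖ ^ 2 - 2 * ⟪φ x, x - c⟫) μ := I1.sub h2
        rw [integral_add h12 I3, integral_sub I1 h2, integral_const_mul]


lemma m_pos (hμ0 : μ ≠ 0) : 0 < (μ Set.univ).toReal :=
  ENNReal.toReal_pos (by simpa [Measure.measure_univ_eq_zero] using hμ0) (measure_ne_top μ _)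

lemma smul_centroid (hμ0 : μ ≠ 0) :
    (μ Set.univ).toReal • muCentroid μ Set.univ = ∫ x, x ∂μ := by
  rw [muCentroid, if_pos (by simpa [Measure.measure_univ_pos] using hμ0), Measure.restrict_univ,
    smul_smul, mul_inv_cancel₀ (m_pos hμ0).ne', one_smul]

lemma sonj_const (lam : ℝ) (c : Euc d) : SONJ μ lam (fun _ => c) = ∫ x, ‖x - c‖ ^ 2 ∂μ := by
  simp [SONJ, norm_sub_rev]

set_option maxHeartbeats 2000000 in
lemma crit (hμ0 : μ ≠ 0) (hsupp : ∃ K : Set (Euc d), IsCompact K ∧ μ Kᶜ = 0)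
    {lam : ℝ} (hlam : Metric.diam (measSupp μ) ≤ lam * (μ Set.univ).toReal) :
    IsSONMin μ lam (fun _ => muCentroid μ Set.univ) := by
  obtain ⟨C, hC0, hC⟩ := ae_bound hsupp
  obtain ⟨K, hK, hK0⟩ := hsupp
  have hsb : Bornology.IsBounded (measSupp μ) := hK.isBounded.subset (suppSub hK hK0)
  set m : ℝ := (μ Set.univ).toReal with hmdef
  have hm : 0 < m := m_pos hμ0
  set c : Euc d := muCentroid μ Set.univ with hcdef
  set D : ℝ := Metric.diam (measSupp μ) with hDdef
  have hD0 : 0 ≤ D := Metric.diam_nonneg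
  refine ⟨memLp_const c, fun v hv => ?_⟩
  set φ : Euc d → Euc d := fun x => v x - c with hφdef
  have hφ : MemLp φ 2 μ := hv.sub (memLp_const c)
  have hφn : Integrable (fun x => ‖φ x‖) μ := (hφ.integrable one_le_two).norm
  -- product-space integrands
  set Φ : Euc d × Euc d → ℝ := fun z => ⟪φ z.1, z.1 - z.2⟫ with hΦdef
  set Ψ : Euc d × Euc d → ℝ := fun z => ‖φ z.1 - φ z.2‖ with hΨdef
  have hΨi : Integrable Ψ (μ.prod μ) := by
    refine Integrable.mono' ((int_fst hφn).add (int_snd hφn))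
      ((hφ.1.comp_fst.sub hφ.1.comp_snd).norm) (Eventually.of_forall fun z => ?_)
    simpa [Ψ] using norm_sub_le (φ z.1) (φ z.2)
  have hΦi : Integrable Φ (μ.prod μ) := by
    refine Integrable.mono' ((int_fst hφn).const_mul (2 * C))
      (hφ.1.comp_fst.inner ((continuous_fst.sub continuous_snd).aestronglyMeasurable)) ?_
    filter_upwards [ae_fst (μ := μ) hC, ae_snd (μ := μ) hC] with z h1 h2
    calc ‖Φ z‖ ≤ ‖φ z.1‖ * ‖z.1 - z.2‖ := norm_inner_le_norm _ _
      _ ≤ ‖φ z.1‖ * (2 * C) := by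
          refine mul_le_mul_of_nonneg_left ((norm_sub_le _ _).trans ?_) (norm_nonneg _)
          linarith
      _ = 2 * C * ‖φ z.1‖ := mul_comm _ _
  have hΦsi : Integrable (fun z => Φ z.swap) (μ.prod μ) := hΦi.swap
  set S : ℝ := ∫ z, Φ z ∂(μ.prod μ) with hSdef
  set P : ℝ := ∫ z, Ψ z ∂(μ.prod μ) with hPdef
  have hP0 : 0 ≤ P := integral_nonneg fun z => norm_nonneg _
  have hswap : ∫ z, Φ z.swap ∂(μ.prod μ) = S := integral_prod_swap Φ
  -- symmetrization
  have hsum : ∫ z, ⟪φ z.1 - φ z.2, z.1 - z.2⟫ ∂(μ.prod μ) = 2 * S := by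
    have : ∀ z : Euc d × Euc d, ⟪φ z.1 - φ z.2, z.1 - z.2⟫ = Φ z + Φ z.swap := by
      intro z
      simp only [Φ, Pi.add_apply, Prod.fst_swap, Prod.snd_swap, inner_sub_left]
      rw [show z.2 - z.1 = -(z.1 - z.2) by abel, inner_neg_right]
      ring
    rw [integral_congr_ae (Eventually.of_forall this), integral_add hΦi hΦsi, hswap]
    ring
  -- diameter bound
  have hbound : ∫ z, ⟪φ z.1 - φ z.2, z.1 - z.2⟫ ∂(μ.prod μ) ≤ D * P := by
    rw [show D * P = ∫ z, D * Ψ z ∂(μ.prod μ) from (integral_const_mul D Ψ).symm]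
    refine integral_mono_ae ((hΦi.add hΦsi).congr ?_) (hΨi.const_mul D) ?_
    · exact Eventually.of_forall fun z => by
        simp only [Φ, Pi.add_apply, Prod.fst_swap, Prod.snd_swap, inner_sub_left]
        rw [show z.2 - z.1 = -(z.1 - z.2) by abel, inner_neg_right]; ring
    · filter_upwards [ae_fst (μ := μ) (ae_mem_supp (μ := μ)), ae_snd (μ := μ)
        (ae_mem_supp (μ := μ))] with z h1 h2
      calc ⟪φ z.1 - φ z.2, z.1 - z.2⟫ ≤ ‖φ z.1 - φ z.2‖ * ‖z.1 - z.2‖ := real_inner_le_norm _ _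
        _ ≤ ‖φ z.1 - φ z.2‖ * D := by
            refine mul_le_mul_of_nonneg_left ?_ (norm_nonneg _)
            rw [← dist_eq_norm]
            exact Metric.dist_le_diam_of_mem hsb h1 h2
        _ = D * Ψ z := mul_comm _ _
  -- centroid identity : S = m * G
  set G : ℝ := ∫ x, ⟪φ x, x - c⟫ ∂μ with hGdef
  have hSG : S = m * G := by
    rw [hSdef, integral_prod Φ hΦi]
    have : ∀ x : Euc d, ∫ y, ⟪φ x, x - y⟫ ∂μ = m * ⟪φ x, x - c⟫ := by
      intro x
      have hint : Integrable (fun y : Euc d => x - y) μ := (integrable_const x).sub (int_id hC)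
      rw [integral_inner hint (φ x)]
      have : ∫ y, (x - y) ∂μ = m • (x - c) := by
        rw [integral_sub (integrable_const x) (int_id hC), integral_const, measureReal_def, smul_sub,
          ← smul_centroid (μ := μ) hμ0, ← hmdef, ← hcdef]
      rw [this, real_inner_smul_right]
    calc ∫ x, ∫ y, ⟪φ x, x - y⟫ ∂μ ∂μ = ∫ x, m * ⟪φ x, x - c⟫ ∂μ :=
          integral_congr_ae (Eventually.of_forall this)
      _ = m * G := integral_const_mul m _
  -- conclude criterion : 2 * G ≤ lam * P
  have hcrit : 2 * G ≤ lam * P := by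
    have h1 : 2 * (m * G) ≤ D * P := by rw [← hSG]; linarith [hsum ▸ hbound]
    have h2 : D * P ≤ lam * m * P := mul_le_mul_of_nonneg_right hlam hP0
    have h3 : m * (2 * G) ≤ m * (lam * P) := by nlinarith
    exact le_of_mul_le_mul_left h3 hm
  -- assemble
  have hdouble : ∫ x, ∫ y, ‖v x - v y‖ ∂μ ∂μ = P := by
    have : ∀ x y : Euc d, v x - v y = φ x - φ y := fun x y => by simp only [hφdef]; abel
    simp_rw [this]
    rw [hPdef, integral_prod Ψ hΨi]
  have hfirst := expand hC hv c
  rw [sonj_const, SONJ, hdouble, hfirst]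
  have hB : 0 ≤ ∫ x, ‖v x - c‖ ^ 2 ∂μ := integral_nonneg fun x => sq_nonneg _
  have : (∫ x, ⟪v x - c, x - c⟫ ∂μ) = G := rfl
  rw [this]
  linarith


lemma int_norm_sub {C : ℝ} (hC : ∀ᵐ x ∂μ, ‖x‖ ≤ C) (c : Euc d) :
    Integrable (fun x => ‖x - c‖) μ := ((int_id hC).sub (integrable_const c)).norm

lemma key_quadratic (hμ0 : μ ≠ 0) {C : ℝ} (hC : ∀ᵐ x ∂μ, ‖x‖ ≤ C) (b : Euc d) :
    ∫ x, ‖x - b‖ ^ 2 ∂μ =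
      (μ Set.univ).toReal * ‖b - muCentroid μ Set.univ‖ ^ 2 +
        ∫ x, ‖x - muCentroid μ Set.univ‖ ^ 2 ∂μ := by
  set c : Euc d := muCentroid μ Set.univ with hcdef
  have h1 : ∫ x, ‖x - b‖ ^ 2 ∂μ = ∫ x, ‖(fun _ : Euc d => b) x - x‖ ^ 2 ∂μ :=
    integral_congr_ae (Eventually.of_forall fun x => by simp only; rw [norm_sub_rev])
  rw [h1, expand hC (memLp_const b) c]
  have h2 : ∫ x, ‖(fun _ : Euc d => b) x - c‖ ^ 2 ∂μ = (μ Set.univ).toReal * ‖b - c‖ ^ 2 := by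
    simp [mul_comm, measureReal_def]
  have h3 : ∫ x, ⟪(fun _ : Euc d => b) x - c, x - c⟫ ∂μ = 0 := by
    have hint : Integrable (fun x : Euc d => x - c) μ := (int_id hC).sub (integrable_const c)
    rw [integral_inner hint (b - c)]
    have : ∫ x, (x - c) ∂μ = 0 := by
      rw [integral_sub (int_id hC) (integrable_const c), integral_const, measureReal_def,
        ← smul_centroid (μ := μ) hμ0, ← hcdef, sub_self]
    rw [this, inner_zero_right]
  rw [h2, h3]
  ring

set_option maxHeartbeats 2000000 in
lemma cohesive_bound (hμ0 : μ ≠ 0) (hsupp : ∃ K : Set (Euc d), IsCompact K ∧ μ Kᶜ = 0)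
    {lam : ℝ} (hlam0 : 0 ≤ lam) (hcoh : Cohesive μ lam) :
    essSup (fun x => ‖x - muCentroid μ Set.univ‖) μ ≤ lam * (μ Set.univ).toReal := by
  obtain ⟨C, hC0, hC⟩ := ae_bound hsupp
  set m : ℝ := (μ Set.univ).toReal with hmdef
  have hm : 0 < m := m_pos hμ0
  set c : Euc d := muCentroid μ Set.univ with hcdef
  obtain ⟨u, ⟨hu2, humin⟩, c₀, huc⟩ := hcoh
  -- J(u) = ∫ ‖x - c₀‖²
  have hJu : SONJ μ lam u = ∫ x, ‖x - c₀‖ ^ 2 ∂μ := by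
    have h1 : ∫ x, ‖u x - x‖ ^ 2 ∂μ = ∫ x, ‖x - c₀‖ ^ 2 ∂μ :=
      integral_congr_ae (huc.mono fun x hx => by simp only [hx]; rw [norm_sub_rev])
    have h2 : ∫ x, ∫ y, ‖u x - u y‖ ∂μ ∂μ = 0 := by
      have : ∀ᵐ x ∂μ, ∫ y, ‖u x - u y‖ ∂μ = 0 := by
        filter_upwards [huc] with x hx
        have : ∫ y, ‖u x - u y‖ ∂μ = ∫ y, (0 : ℝ) ∂μ :=
          integral_congr_ae (huc.mono fun y hy => by simp [hx, hy])
        simpa using this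
      rw [integral_congr_ae this]
      simp
    rw [SONJ, h1, h2, mul_zero, add_zero]
  -- c₀ = c
  have hc₀ : c₀ = c := by
    have hle := humin (fun _ => c) (memLp_const c)
    rw [hJu, sonj_const, key_quadratic hμ0 hC c₀, ← hcdef, ← hmdef] at hle
    have : m * ‖c₀ - c‖ ^ 2 ≤ 0 := by
      have hcc : ‖c - c‖ ^ 2 = 0 := by simp
      nlinarith [hle]
    have : ‖c₀ - c‖ ^ 2 ≤ 0 := nonpos_of_mul_nonpos_right (by linarith [this]) hm
    have : ‖c₀ - c‖ = 0 := by nlinarith [norm_nonneg (c₀ - c)]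
    rwa [norm_eq_zero, sub_eq_zero] at this
  rw [hc₀] at huc hJu
  -- main argument
  by_contra hcon
  push_neg at hcon
  set R : ℝ := essSup (fun x => ‖x - c‖) μ with hRdef
  set s : ℝ := (lam * m + R) / 2 with hsdef
  have hs0 : 0 < s := by
    have := mul_nonneg hlam0 hm.le
    rw [hsdef]; linarith
  have hslam : lam * m < s := by rw [hsdef]; linarith
  have hsR : s < R := by rw [hsdef]; linarith
  set A : Set (Euc d) := {x | s < ‖x - c‖} with hAdef
  have hA : MeasurableSet A :=
    measurableSet_lt measurable_const ((continuous_id.sub continuous_const).norm.measurable)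
  -- μ A > 0
  have hApos : 0 < μ A := by
    rcases eq_or_lt_of_le (zero_le : 0 ≤ μ A) with h0 | h0
    · exfalso
      haveI : (ae μ).NeBot := ae_neBot.mpr hμ0
      have hae : ∀ᵐ x ∂μ, ‖x - c‖ ≤ s := by
        rw [ae_iff]
        convert h0.symm using 2
        ext x
        simp [hAdef, not_le]
      have hcob : IsCoboundedUnder (· ≤ ·) (ae μ) (fun x => ‖x - c‖) :=
        isCoboundedUnder_le_of_eventually_le _ (Eventually.of_forall fun x => norm_nonneg _)
      have : R ≤ s := limsup_le_of_le hcob hae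
      linarith
    · exact h0
  set a : ℝ := (μ A).toReal with hadef
  have ha : 0 < a := ENNReal.toReal_pos hApos.ne' (measure_ne_top μ A)
  -- the perturbation direction
  set φ : Euc d → Euc d := A.indicator (fun x => ‖x - c‖⁻¹ • (x - c)) with hφdef
  have hφm : Measurable φ := by
    refine Measurable.indicator ?_ hA
    exact ((continuous_id.sub continuous_const).norm.measurable.inv).smul
      ((continuous_id.sub continuous_const).measurable)
  have hφnorm : ∀ x, ‖φ x‖ = A.indicator (fun _ => (1 : ℝ)) x := by
    intro x
    by_cases hx : x ∈ A
    · have hxc : x - c ≠ 0 := by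
        intro h
        have : ‖x - c‖ = 0 := by rw [h, norm_zero]
        have hxA : s < ‖x - c‖ := hx
        rw [this] at hxA; linarith
      simp only [hφdef, Set.indicator_of_mem hx, norm_smul, norm_inv, norm_norm]
      rw [inv_mul_cancel₀ (norm_ne_zero_iff.mpr hxc)]
    · simp [hφdef, Set.indicator_of_notMem hx]
  have hφbd : ∀ x, ‖φ x‖ ≤ 1 := by
    intro x
    rw [hφnorm]
    by_cases hx : x ∈ A <;> simp [hx]
  have hφ2 : MemLp φ 2 μ :=
    MemLp.of_bound hφm.aestronglyMeasurable 1 (Eventually.of_forall hφbd)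
  -- key integrals
  set B : ℝ := ∫ x, ‖φ x‖ ^ 2 ∂μ with hBdef
  set G : ℝ := ∫ x, ⟪φ x, x - c⟫ ∂μ with hGdef
  set P : ℝ := ∫ x, ∫ y, ‖φ x - φ y‖ ∂μ ∂μ with hPdef
  have hB : B = a := by
    have : ∀ x, ‖φ x‖ ^ 2 = A.indicator (fun _ => (1 : ℝ)) x := by
      intro x
      rw [hφnorm]
      by_cases hx : x ∈ A <;> simp [hx]
    rw [hBdef, integral_congr_ae (Eventually.of_forall this), integral_indicator_const _ hA]
    simp [hadef, measureReal_def]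
  have hGa : s * a ≤ G := by
    have hpt : ∀ x, ⟪φ x, x - c⟫ = A.indicator (fun x => ‖x - c‖) x := by
      intro x
      by_cases hx : x ∈ A
      · have hxc : (0:ℝ) < ‖x - c‖ := lt_trans hs0 hx
        simp only [hφdef, Set.indicator_of_mem hx, real_inner_smul_left,
          real_inner_self_eq_norm_sq]
        field_simp
      · simp [hφdef, Set.indicator_of_notMem hx]
    rw [hGdef, integral_congr_ae (Eventually.of_forall hpt), integral_indicator hA]
    have := setIntegral_ge_of_const_le hA (measure_ne_top μ A)
      (fun x hx => le_of_lt hx) ((int_norm_sub hC c).integrableOn)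
    rw [smul_eq_mul, mul_comm] at this
    exact this
  have hPa : P ≤ 2 * m * a := by
    have hφn1 : Integrable (fun x => ‖φ x‖) μ := (hφ2.integrable one_le_two).norm
    have hΨi : Integrable (fun z : Euc d × Euc d => ‖φ z.1 - φ z.2‖) (μ.prod μ) := by
      refine Integrable.mono' ((int_fst hφn1).add (int_snd hφn1))
        ((hφm.aestronglyMeasurable.comp_fst.sub hφm.aestronglyMeasurable.comp_snd).norm)
        (Eventually.of_forall fun z => ?_)
      simpa using norm_sub_le (φ z.1) (φ z.2)
    have hN : ∫ x, ‖φ x‖ ∂μ = a := by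
      rw [integral_congr_ae (Eventually.of_forall hφnorm), integral_indicator_const _ hA]
      simp [hadef, measureReal_def]
    have h1 : P = ∫ z, ‖φ z.1 - φ z.2‖ ∂(μ.prod μ) := by
      rw [hPdef, integral_prod _ hΨi]
    have h2 : ∫ z, ‖φ z.1 - φ z.2‖ ∂(μ.prod μ) ≤
        ∫ z, (‖φ z.1‖ + ‖φ z.2‖) ∂(μ.prod μ) := by
      refine integral_mono_ae (hΨi) ((int_fst hφn1).add (int_snd hφn1))
        (Eventually.of_forall fun z => norm_sub_le _ _)
    have h3 : ∫ z, (‖φ z.1‖ + ‖φ z.2‖) ∂(μ.prod μ) = 2 * m * a := by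
      have hfst := integral_fun_fst (μ := μ) (ν := μ) (fun x => ‖φ x‖)
      have hsnd := integral_fun_snd (μ := μ) (ν := μ) (fun x => ‖φ x‖)
      rw [integral_add (int_fst hφn1) (int_snd hφn1), hfst, hsnd, hN, measureReal_def, ← hmdef]
      rw [smul_eq_mul]
      ring
    rw [h1]
    linarith [h2, h3.le, h3.ge]
  -- perturbation inequality at t := min 1 (s - lam * m)
  set t : ℝ := min 1 (s - lam * m) with htdef
  have ht0 : 0 < t := lt_min one_pos (by linarith)
  have ht1 : t ≤ 1 := min_le_left _ _
  have hts : t ≤ s - lam * m := min_le_right _ _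
  set v : Euc d → Euc d := fun x => c + t • φ x with hvdef
  have hv2 : MemLp v 2 μ := (memLp_const c).add (hφ2.const_smul t)
  have hkey := humin v hv2
  rw [hJu] at hkey
  -- compute SONJ μ lam v
  have hvc : ∀ x, v x - c = t • φ x := fun x => by simp [hvdef]
  have hfirst : ∫ x, ‖v x - x‖ ^ 2 ∂μ =
      t ^ 2 * B - 2 * (t * G) + ∫ x, ‖x - c‖ ^ 2 ∂μ := by
    rw [expand hC hv2 c]
    have e1 : ∫ x, ‖v x - c‖ ^ 2 ∂μ = t ^ 2 * B := by
      rw [hBdef, ← integral_const_mul]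
      refine integral_congr_ae (Eventually.of_forall fun x => ?_)
      simp only
      rw [hvc x, norm_smul, Real.norm_eq_abs, abs_of_pos ht0, mul_pow]
    have e2 : ∫ x, ⟪v x - c, x - c⟫ ∂μ = t * G := by
      rw [hGdef, ← integral_const_mul]
      refine integral_congr_ae (Eventually.of_forall fun x => ?_)
      simp only
      rw [hvc x, real_inner_smul_left]
    rw [e1, e2]
  have hsecond : ∫ x, ∫ y, ‖v x - v y‖ ∂μ ∂μ = t * P := by
    have hpt : ∀ x y, ‖v x - v y‖ = t * ‖φ x - φ y‖ := by
      intro x y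
      have : v x - v y = t • (φ x - φ y) := by
        simp only [hvdef, smul_sub]
        abel
      rw [this, norm_smul, Real.norm_eq_abs, abs_of_pos ht0]
    have hin : ∀ x, ∫ y, ‖v x - v y‖ ∂μ = t * ∫ y, ‖φ x - φ y‖ ∂μ := by
      intro x
      rw [← integral_const_mul]
      exact integral_congr_ae (Eventually.of_forall fun y => hpt x y)
    rw [integral_congr_ae (Eventually.of_forall hin), integral_const_mul, hPdef]
  rw [SONJ, hfirst, hsecond] at hkey
  -- conclude
  have hP0 : 0 ≤ P := by
    rw [hPdef]
    exact integral_nonneg fun x => integral_nonneg fun y => norm_nonneg _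
  have hineq : 0 ≤ t ^ 2 * B - 2 * (t * G) + lam * (t * P) := by linarith
  rw [hB] at hineq
  have h2G : 2 * G ≤ t * a + lam * P := by nlinarith
  have hfin : 2 * (s * a) ≤ t * a + lam * (2 * m * a) := by
    have := mul_le_mul_of_nonneg_left hPa hlam0
    linarith [hGa]
  nlinarith

end Scratch

/-- **Proposition (two-sided bound on `λ₁`).**
`R(μ)/μ(ℝ^d) ≤ λ₁(μ) ≤ diam(supp μ)/μ(ℝ^d)`, where
`R(μ) = esssup_{x∼μ} |x - C_μ(ℝ^d)|`. -/
theorem stmt10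
    (d : ℕ) (μ : Measure (Euc d)) [IsFiniteMeasure μ] (hμ0 : μ ≠ 0)
    (hsupp : ∃ K : Set (Euc d), IsCompact K ∧ μ Kᶜ = 0) :
    essSup (fun x => ‖x - muCentroid μ Set.univ‖) μ / (μ Set.univ).toReal ≤ lambda1 μ ∧
      lambda1 μ ≤ Metric.diam (measSupp μ) / (μ Set.univ).toReal := by
  have hm : 0 < (μ Set.univ).toReal := Scratch.m_pos hμ0
  set m : ℝ := (μ Set.univ).toReal with hmdef
  set D : ℝ := Metric.diam (measSupp μ) with hDdef
  have hD0 : 0 ≤ D := Metric.diam_nonneg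
  set S : Set ℝ := {lam : ℝ | 0 ≤ lam ∧ Cohesive μ lam} with hSdef
  have hmem : D / m ∈ S := by
    refine ⟨div_nonneg hD0 hm.le, ⟨fun _ => muCentroid μ Set.univ, ?_,
      ⟨muCentroid μ Set.univ, Filter.EventuallyEq.rfl⟩⟩⟩
    refine Scratch.crit hμ0 hsupp ?_
    rw [div_mul_cancel₀ _ hm.ne']
  have hbdd : BddBelow S := ⟨0, fun x hx => hx.1⟩
  constructor
  · refine le_csInf ⟨D / m, hmem⟩ fun lam hlam => ?_
    have := Scratch.cohesive_bound hμ0 hsupp hlam.1 hlam.2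
    rw [div_le_iff₀ hm]
    exact this
  · exact csInf_le hbdd hmem
end
end

section
/- Let μ be a nonzero finite Borel measure on ℝ^d with compact support, and let q₁ ∈ L^∞(μ⊗μ; ℝ^d) satisfy q₁(x,y) = −q₁(y,x) for μ-a.e. x,y. Then λ₁(μ) ≤ μ(ℝ^d)^{-1} · esssup_{x,y∼μ} | q₁(x,y) + x − y − ⨍ q₁(x,z) dμ(z) + ⨍ q₁(y,z) dμ(z) |. -/
open MeasureTheory Filter Topology ProbabilityTheory
open scoped ENNReal NNReal symmDiff Classical RealInnerProductSpace

noncomputable section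

section Aux

variable {E : Type*} [NormedAddCommGroup E] [InnerProductSpace ℝ E]

lemma innerId (a x c : E) :
    ‖c - x‖ ^ 2 + ‖a - c‖ ^ 2 + 2 * ⟪c, x - c⟫ = ‖a - x‖ ^ 2 + 2 * ⟪x - c, a⟫ := by
  rw [norm_sub_sq_real, norm_sub_sq_real, norm_sub_sq_real, inner_sub_left, inner_sub_right,
    real_inner_self_eq_norm_sq, real_inner_comm c a, real_inner_comm x a]
  ring

end Aux

set_option maxHeartbeats 2000000 in
/-- **Proposition (approximate dual feasibility bound).**  For any `μ⊗μ`-a.e.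
antisymmetric `q₁ ∈ L^∞(μ⊗μ;ℝ^d)`,
`λ₁(μ) ≤ μ(ℝ^d)⁻¹ esssup_{x,y∼μ} |q₁(x,y) + x - y - ⨍ q₁(x,z)dμ(z) + ⨍ q₁(y,z)dμ(z)|`. -/
theorem stmt11
    (d : ℕ) (μ : Measure (Euc d)) [IsFiniteMeasure μ] (hμ0 : μ ≠ 0)
    (hsupp : ∃ K : Set (Euc d), IsCompact K ∧ μ Kᶜ = 0)
    (q₁ : Euc d → Euc d → Euc d)
    (hq : MemLp (fun p : Euc d × Euc d => q₁ p.1 p.2) ⊤ (μ.prod μ))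
    (hanti : ∀ᵐ p ∂μ.prod μ, q₁ p.1 p.2 = -q₁ p.2 p.1) :
    lambda1 μ ≤ (μ Set.univ).toReal⁻¹ *
      essSup (fun p : Euc d × Euc d =>
        ‖q₁ p.1 p.2 + p.1 - p.2 - ⨍ z, q₁ p.1 z ∂μ + ⨍ z, q₁ p.2 z ∂μ‖) (μ.prod μ) := by
  obtain ⟨K, hKcomp, hKc⟩ := hsupp
  have hμuniv : μ Set.univ ≠ 0 := by
    simpa [Measure.measure_univ_ne_zero] using hμ0
  set ν : Measure (Euc d × Euc d) := μ.prod μ with hνdef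
  have hνuniv : ν Set.univ ≠ 0 := by
    rw [hνdef, ← Set.univ_prod_univ, Measure.prod_prod]
    exact mul_ne_zero hμuniv hμuniv
  have hν0 : ν ≠ 0 := by
    intro h; rw [h] at hνuniv; simp at hνuniv
  haveI hνae : (ae ν).NeBot := ae_neBot.2 hν0
  set m : ℝ := (μ Set.univ).toReal with hmdef
  have hm : 0 < m := ENNReal.toReal_pos hμuniv (measure_ne_top μ _)
  set Q : Euc d → Euc d := fun x => ⨍ z, q₁ x z ∂μ with hQdef
  set F : Euc d × Euc d → Euc d := fun p => q₁ p.1 p.2 + p.1 - p.2 - Q p.1 + Q p.2 with hFdef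
  set M : ℝ := essSup (fun p : Euc d × Euc d => ‖F p‖) ν with hMdef
  -- the q₁ bound
  have hqm : AEStronglyMeasurable (fun p : Euc d × Euc d => q₁ p.1 p.2) ν := hq.1
  obtain ⟨C, hC0, hqC⟩ : ∃ C : ℝ, 0 ≤ C ∧ ∀ᵐ p ∂ν, ‖q₁ p.1 p.2‖ ≤ C := by
    refine ⟨(eLpNormEssSup (fun p : Euc d × Euc d => q₁ p.1 p.2) ν).toReal,
      ENNReal.toReal_nonneg, ?_⟩
    have hlt : eLpNormEssSup (fun p : Euc d × Euc d => q₁ p.1 p.2) ν < ⊤ := by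
      have h2 := hq.2
      rwa [eLpNorm_exponent_top] at h2
    filter_upwards [ae_le_eLpNormEssSup (f := fun p : Euc d × Euc d => q₁ p.1 p.2) (μ := ν)]
      with p hp
    have h3 := ENNReal.toReal_mono hlt.ne hp
    simpa using h3
  -- support bound
  obtain ⟨R, hR⟩ := hKcomp.isBounded.exists_norm_le
  have hxR : ∀ᵐ x ∂μ, ‖x‖ ≤ R := by
    have hK : ∀ᵐ x ∂μ, x ∈ K := by
      rw [ae_iff]
      simpa [Set.compl_def] using hKc
    filter_upwards [hK] with x hx using hR x hx
  -- Q facts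
  have haeq : ∀ᵐ x ∂μ, ∀ᵐ z ∂μ, ‖q₁ x z‖ ≤ C := Measure.ae_ae_of_ae_prod hqC
  have hQC : ∀ᵐ x ∂μ, ‖Q x‖ ≤ C := by
    filter_upwards [haeq] with x hx
    have h1 : ‖∫ z, q₁ x z ∂μ‖ ≤ C * m := by
      have h0 := norm_integral_le_of_norm_le_const hx
      rwa [measureReal_def, ← hmdef] at h0
    have h2 : ‖Q x‖ = m⁻¹ * ‖∫ z, q₁ x z ∂μ‖ := by
      simp only [hQdef]
      rw [average_eq, measureReal_def, ← hmdef, norm_smul, Real.norm_eq_abs, abs_of_nonneg (by positivity)]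
    rw [h2]
    calc m⁻¹ * ‖∫ z, q₁ x z ∂μ‖ ≤ m⁻¹ * (C * m) := by
          exact mul_le_mul_of_nonneg_left h1 (by positivity)
      _ = C := by field_simp
  have hQm : AEStronglyMeasurable Q μ := by
    have h1 : AEStronglyMeasurable (fun x => ∫ z, q₁ x z ∂μ) μ := hqm.integral_prod_right'
    have h2 : Q = fun x => m⁻¹ • ∫ z, q₁ x z ∂μ := by
      funext x
      simp only [hQdef]
      rw [average_eq, measureReal_def, ← hmdef]
    rw [h2]
    exact h1.const_smul m⁻¹
  have hQavg : ∀ x, m • Q x = ∫ z, q₁ x z ∂μ := by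
    intro x
    simp only [hQdef]
    rw [average_eq, measureReal_def, ← hmdef, smul_inv_smul₀ hm.ne']
  have hQi : Integrable Q μ := (integrable_const C).mono' hQm hQC
  have hqi : Integrable (fun p : Euc d × Euc d => q₁ p.1 p.2) ν :=
    (integrable_const C).mono' hqm hqC
  -- ∫ q₁ over ν is 0
  have hq0 : (∫ p : Euc d × Euc d, q₁ p.1 p.2 ∂ν) = 0 := by
    have h1 : ∫ p : Euc d × Euc d, q₁ p.2 p.1 ∂ν = ∫ p : Euc d × Euc d, q₁ p.1 p.2 ∂ν :=
      integral_prod_swap (fun p : Euc d × Euc d => q₁ p.1 p.2)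
    have h2 : ∫ p : Euc d × Euc d, q₁ p.2 p.1 ∂ν = ∫ p : Euc d × Euc d, -q₁ p.1 p.2 ∂ν := by
      refine integral_congr_ae ?_
      filter_upwards [hanti] with p hp
      rw [hp, neg_neg]
    rw [h2, integral_neg] at h1
    have h3 : (∫ p : Euc d × Euc d, q₁ p.1 p.2 ∂ν) + ∫ p : Euc d × Euc d, q₁ p.1 p.2 ∂ν = 0 := by
      nth_rewrite 1 [← h1]
      exact neg_add_cancel _
    rw [← two_smul ℝ] at h3
    rcases smul_eq_zero.1 h3 with h | h
    · norm_num at h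
    · exact h
  have hQ0 : ∫ x, Q x ∂μ = 0 := by
    have h1 : ∫ x, Q x ∂μ = m⁻¹ • ∫ x, ∫ z, q₁ x z ∂μ ∂μ := by
      calc ∫ x, Q x ∂μ = ∫ x, m⁻¹ • ∫ z, q₁ x z ∂μ ∂μ := by
            refine integral_congr_ae (Eventually.of_forall fun x => ?_)
            simp only [hQdef]
            rw [average_eq, measureReal_def, ← hmdef]
        _ = m⁻¹ • ∫ x, ∫ z, q₁ x z ∂μ ∂μ := integral_smul _ _
    have h2 : ∫ x, ∫ z, q₁ x z ∂μ ∂μ = ∫ p : Euc d × Euc d, q₁ p.1 p.2 ∂ν :=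
      (integral_prod _ hqi).symm
    rw [h1, h2, hq0, smul_zero]
  -- centroid
  have hid : Integrable (fun x : Euc d => x) μ :=
    (integrable_const R).mono' aestronglyMeasurable_id hxR
  set c : Euc d := ⨍ x, x ∂μ with hcdef
  have hcint : ∫ x, x ∂μ = m • c := by
    rw [hcdef, average_eq, measureReal_def, ← hmdef, smul_inv_smul₀ hm.ne']
  -- F facts
  have hFm : AEStronglyMeasurable F ν := by
    simp only [hFdef]
    exact ((((hqm.add measurable_fst.aestronglyMeasurable).sub
      measurable_snd.aestronglyMeasurable).sub (hQm.comp_quasiMeasurePreserving Measure.quasiMeasurePreserving_fst)).add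
      (hQm.comp_quasiMeasurePreserving Measure.quasiMeasurePreserving_snd))
  have hae1 : ∀ {P : Euc d → Prop}, (∀ᵐ x ∂μ, P x) → ∀ᵐ p : Euc d × Euc d ∂ν, P p.1 :=
    fun h => Measure.quasiMeasurePreserving_fst.ae h
  have hae2 : ∀ {P : Euc d → Prop}, (∀ᵐ x ∂μ, P x) → ∀ᵐ p : Euc d × Euc d ∂ν, P p.2 :=
    fun h => Measure.quasiMeasurePreserving_snd.ae h
  have hFb : ∀ᵐ p : Euc d × Euc d ∂ν, ‖F p‖ ≤ C + R + R + C + C := by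
    filter_upwards [hqC, hae1 hxR, hae2 hxR, hae1 hQC, hae2 hQC] with p h1 h2 h3 h4 h5
    simp only [hFdef]
    calc ‖q₁ p.1 p.2 + p.1 - p.2 - Q p.1 + Q p.2‖
        ≤ ‖q₁ p.1 p.2 + p.1 - p.2 - Q p.1‖ + ‖Q p.2‖ := norm_add_le _ _
      _ ≤ (‖q₁ p.1 p.2 + p.1 - p.2‖ + ‖Q p.1‖) + ‖Q p.2‖ := by
          gcongr
          exact norm_sub_le _ _
      _ ≤ ((‖q₁ p.1 p.2 + p.1‖ + ‖p.2‖) + ‖Q p.1‖) + ‖Q p.2‖ := by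
          gcongr
          exact norm_sub_le _ _
      _ ≤ (((‖q₁ p.1 p.2‖ + ‖p.1‖) + ‖p.2‖) + ‖Q p.1‖) + ‖Q p.2‖ := by
          gcongr
          exact norm_add_le _ _
      _ ≤ C + R + R + C + C := by
          have := norm_nonneg (q₁ p.1 p.2)
          linarith
  have hFi : Integrable F ν := (integrable_const _).mono' hFm hFb
  have hMb : ∀ᵐ p : Euc d × Euc d ∂ν, ‖F p‖ ≤ M := by
    have h1 := ae_le_essSup (μ := ν) (f := fun p : Euc d × Euc d => ‖F p‖)
      ⟨C + R + R + C + C, by rwa [eventually_map]⟩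
    simpa [← hMdef] using h1
  have hM0 : 0 ≤ M := by
    obtain ⟨p, hp⟩ := hMb.exists
    exact le_trans (norm_nonneg _) hp
  have hlam0 : 0 ≤ m⁻¹ * M := by positivity
  -- antisymmetry of F
  have hFswap : ∀ᵐ p : Euc d × Euc d ∂ν, F (p.2, p.1) = -F p := by
    filter_upwards [hanti] with p hp
    have h2 : q₁ p.2 p.1 = -q₁ p.1 p.2 := by rw [hp, neg_neg]
    simp only [hFdef, h2]
    abel
  -- mean of F in the second variable
  have hFmean : ∀ᵐ x ∂μ, ∫ y, F (x, y) ∂μ = m • (x - c) := by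
    have hqae : ∀ᵐ x ∂μ, Integrable (fun y => q₁ x y) μ := hqi.prod_right_ae
    filter_upwards [hqae] with x hx
    have i1 : Integrable (fun y : Euc d => q₁ x y + x) μ := hx.add (integrable_const x)
    have i2 : Integrable (fun y : Euc d => q₁ x y + x - y) μ := i1.sub hid
    have i3 : Integrable (fun y : Euc d => q₁ x y + x - y - Q x) μ :=
      i2.sub (integrable_const (Q x))
    have e1 : ∫ y, F (x, y) ∂μ
        = ((((∫ y, q₁ x y ∂μ) + ∫ _, x ∂μ) - ∫ y, y ∂μ) - ∫ _, Q x ∂μ) + ∫ y, Q y ∂μ := by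
      simp only [hFdef]
      rw [integral_add i3 hQi, integral_sub i2 (integrable_const (Q x)),
        integral_sub i1 hid, integral_add hx (integrable_const x)]
    rw [e1, integral_const, integral_const, hcint, ← hQavg x, hQ0, measureReal_def, ← hmdef, smul_sub]
    abel
  -- the candidate λ
  set lam : ℝ := m⁻¹ * M with hlamdef
  -- the constant function is a minimizer
  have hmin : IsSONMin μ lam (fun _ => c) := by
    refine ⟨memLp_const c, fun v hv => ?_⟩
    have hvi : Integrable v μ := hv.integrable one_le_two
    have hvm : AEStronglyMeasurable v μ := hv.aestronglyMeasurable
    have hv1 : Integrable (fun p : Euc d × Euc d => v p.1) ν := by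
      have h1 : Integrable v (ν.map Prod.fst) := by
        rw [hνdef, Measure.map_fst_prod]
        exact hvi.smul_measure (measure_ne_top μ _)
      exact (integrable_map_measure h1.aestronglyMeasurable measurable_fst.aemeasurable).1 h1
    have hv2 : Integrable (fun p : Euc d × Euc d => v p.2) ν := by
      have h1 : Integrable v (ν.map Prod.snd) := by
        rw [hνdef, Measure.map_snd_prod]
        exact hvi.smul_measure (measure_ne_top μ _)
      exact (integrable_map_measure h1.aestronglyMeasurable measurable_snd.aemeasurable).1 h1
    have hΔi : Integrable (fun p : Euc d × Euc d => v p.1 - v p.2) ν := hv1.sub hv2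
    have hΔni : Integrable (fun p : Euc d × Euc d => ‖v p.1 - v p.2‖) ν := hΔi.norm
    -- integrability of the inner products over ν
    have hinner1 : Integrable (fun p : Euc d × Euc d => ⟪F p, v p.1 - v p.2⟫) ν := by
      refine (hΔni.const_mul (C + R + R + C + C)).mono'
        (hFm.inner hΔi.aestronglyMeasurable) ?_
      filter_upwards [hFb] with p hp
      calc ‖⟪F p, v p.1 - v p.2⟫‖ = |⟪F p, v p.1 - v p.2⟫| := Real.norm_eq_abs _
        _ ≤ ‖F p‖ * ‖v p.1 - v p.2‖ := abs_real_inner_le_norm _ _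
        _ ≤ (C + R + R + C + C) * ‖v p.1 - v p.2‖ :=
            mul_le_mul_of_nonneg_right hp (norm_nonneg _)
    have hinner2 : Integrable (fun p : Euc d × Euc d => ⟪F p, v p.1⟫) ν := by
      refine (hv1.norm.const_mul (C + R + R + C + C)).mono'
        (hFm.inner hv1.aestronglyMeasurable) ?_
      filter_upwards [hFb] with p hp
      calc ‖⟪F p, v p.1⟫‖ = |⟪F p, v p.1⟫| := Real.norm_eq_abs _
        _ ≤ ‖F p‖ * ‖v p.1‖ := abs_real_inner_le_norm _ _
        _ ≤ (C + R + R + C + C) * ‖v p.1‖ := mul_le_mul_of_nonneg_right hp (norm_nonneg _)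
    have hinner3 : Integrable (fun p : Euc d × Euc d => ⟪F p, v p.2⟫) ν := by
      refine (hv2.norm.const_mul (C + R + R + C + C)).mono'
        (hFm.inner hv2.aestronglyMeasurable) ?_
      filter_upwards [hFb] with p hp
      calc ‖⟪F p, v p.2⟫‖ = |⟪F p, v p.2⟫| := Real.norm_eq_abs _
        _ ≤ ‖F p‖ * ‖v p.2‖ := abs_real_inner_le_norm _ _
        _ ≤ (C + R + R + C + C) * ‖v p.2‖ := mul_le_mul_of_nonneg_right hp (norm_nonneg _)
    -- Step A: Cauchy–Schwarz + essSup bound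
    have stepA : ∫ p : Euc d × Euc d, ⟪F p, v p.1 - v p.2⟫ ∂ν
        ≤ M * ∫ p : Euc d × Euc d, ‖v p.1 - v p.2‖ ∂ν := by
      have h1 : ∫ p : Euc d × Euc d, ⟪F p, v p.1 - v p.2⟫ ∂ν
          ≤ ∫ p : Euc d × Euc d, M * ‖v p.1 - v p.2‖ ∂ν := by
        refine integral_mono_ae hinner1 (hΔni.const_mul M) ?_
        filter_upwards [hMb] with p hp
        calc ⟪F p, v p.1 - v p.2⟫ ≤ ‖F p‖ * ‖v p.1 - v p.2‖ := real_inner_le_norm _ _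
          _ ≤ M * ‖v p.1 - v p.2‖ := mul_le_mul_of_nonneg_right hp (norm_nonneg _)
      rwa [integral_const_mul] at h1
    -- Step B: antisymmetry
    have hswap2 : ∫ p : Euc d × Euc d, ⟪F p, v p.2⟫ ∂ν
        = -∫ p : Euc d × Euc d, ⟪F p, v p.1⟫ ∂ν := by
      have h1 : ∫ p : Euc d × Euc d, ⟪F (p.2, p.1), v p.1⟫ ∂ν
          = ∫ p : Euc d × Euc d, ⟪F p, v p.2⟫ ∂ν :=
        integral_prod_swap (fun p : Euc d × Euc d => ⟪F p, v p.2⟫)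
      have h2 : ∫ p : Euc d × Euc d, ⟪F (p.2, p.1), v p.1⟫ ∂ν
          = ∫ p : Euc d × Euc d, -⟪F p, v p.1⟫ ∂ν := by
        refine integral_congr_ae ?_
        filter_upwards [hFswap] with p hp
        rw [hp, inner_neg_left]
      rw [← h1, h2, integral_neg]
    have stepB : ∫ p : Euc d × Euc d, ⟪F p, v p.1 - v p.2⟫ ∂ν
        = 2 * ∫ p : Euc d × Euc d, ⟪F p, v p.1⟫ ∂ν := by
      have h1 : ∫ p : Euc d × Euc d, ⟪F p, v p.1 - v p.2⟫ ∂ν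
          = ∫ p : Euc d × Euc d, (⟪F p, v p.1⟫ - ⟪F p, v p.2⟫) ∂ν := by
        refine integral_congr_ae (Eventually.of_forall fun p => ?_)
        exact inner_sub_right _ _ _
      rw [h1, integral_sub hinner2 hinner3, hswap2]
      ring
    -- Step C: Fubini
    have stepC : ∫ p : Euc d × Euc d, ⟪F p, v p.1⟫ ∂ν = m * ∫ x, ⟪x - c, v x⟫ ∂μ := by
      have hiter : ∫ p : Euc d × Euc d, ⟪F p, v p.1⟫ ∂ν
          = ∫ x, ∫ y, ⟪F (x, y), v x⟫ ∂μ ∂μ := integral_prod _ hinner2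
      have h1 : ∀ᵐ x ∂μ, ∫ y, ⟪F (x, y), v x⟫ ∂μ = m * ⟪x - c, v x⟫ := by
        filter_upwards [hFmean, hFi.prod_right_ae] with x ha hb
        have h3 : ∫ y, ⟪F (x, y), v x⟫ ∂μ = ∫ y, ⟪v x, F (x, y)⟫ ∂μ := by
          refine integral_congr_ae (Eventually.of_forall fun y => ?_)
          exact real_inner_comm _ _
        rw [h3, integral_inner hb, ha, real_inner_smul_right, real_inner_comm]
      rw [hiter, integral_congr_ae h1, integral_const_mul]
    -- putting A, B, C together
    have hiter2 : ∫ x, ∫ y, ‖v x - v y‖ ∂μ ∂μ = ∫ p : Euc d × Euc d, ‖v p.1 - v p.2‖ ∂ν :=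
      (integral_prod _ hΔni).symm
    have key : 2 * ∫ x, ⟪x - c, v x⟫ ∂μ ≤ lam * ∫ x, ∫ y, ‖v x - v y‖ ∂μ ∂μ := by
      rw [hiter2]
      have h4 : 2 * ∫ x, ⟪x - c, v x⟫ ∂μ
          = m⁻¹ * ∫ p : Euc d × Euc d, ⟪F p, v p.1 - v p.2⟫ ∂ν := by
        rw [stepB, stepC]
        field_simp
      rw [h4, hlamdef]
      calc m⁻¹ * ∫ p : Euc d × Euc d, ⟪F p, v p.1 - v p.2⟫ ∂ν
          ≤ m⁻¹ * (M * ∫ p : Euc d × Euc d, ‖v p.1 - v p.2‖ ∂ν) :=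
            mul_le_mul_of_nonneg_left stepA (by positivity)
        _ = m⁻¹ * M * ∫ p : Euc d × Euc d, ‖v p.1 - v p.2‖ ∂ν := by ring
    -- Step D: quadratic expansion
    have hxL2 : MemLp (fun x : Euc d => x) 2 μ := MemLp.of_bound aestronglyMeasurable_id R hxR
    have hcL2 : MemLp (fun _ : Euc d => c) 2 μ := memLp_const c
    have innerInt : ∀ {f g : Euc d → Euc d}, MemLp f 2 μ → MemLp g 2 μ →
        Integrable (fun x => ⟪f x, g x⟫) μ := by
      intro f g hf hg
      have h := L2.integrable_inner (𝕜 := ℝ) (hf.toLp f) (hg.toLp g)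
      refine h.congr ?_
      filter_upwards [hf.coeFn_toLp, hg.coeFn_toLp] with x h1 h2
      rw [h1, h2]
    have sqInt : ∀ {f : Euc d → Euc d}, MemLp f 2 μ → Integrable (fun x => ‖f x‖ ^ 2) μ := by
      intro f hf
      refine (innerInt hf hf).congr (Eventually.of_forall fun x => ?_)
      exact real_inner_self_eq_norm_sq _
    have hIP1 : Integrable (fun x => ⟪x - c, v x⟫) μ := innerInt (hxL2.sub hcL2) hv
    have hsq1 : Integrable (fun x => ‖v x - x‖ ^ 2) μ := sqInt (hv.sub hxL2)
    have hsq2 : Integrable (fun x => ‖c - x‖ ^ 2) μ := sqInt (hcL2.sub hxL2)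
    have hsq3 : Integrable (fun x => ‖v x - c‖ ^ 2) μ := sqInt (hv.sub hcL2)
    have hIP2 : Integrable (fun x => ⟪c, x - c⟫) μ := innerInt hcL2 (hxL2.sub hcL2)
    have hsubi : Integrable (fun x : Euc d => x - c) μ := hid.sub (integrable_const c)
    have hcc : ∫ x, ⟪c, x - c⟫ ∂μ = 0 := by
      rw [integral_inner hsubi c, integral_sub hid (integrable_const c), integral_const,
        hcint, measureReal_def, ← hmdef, sub_self, inner_zero_right]
    have stepD : ∫ x, ‖c - x‖ ^ 2 ∂μ
        ≤ ∫ x, ‖v x - x‖ ^ 2 ∂μ + 2 * ∫ x, ⟪x - c, v x⟫ ∂μ := by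
      have h1 : ∫ x, (‖c - x‖ ^ 2 + ‖v x - c‖ ^ 2 + 2 * ⟪c, x - c⟫) ∂μ
          = ∫ x, (‖v x - x‖ ^ 2 + 2 * ⟪x - c, v x⟫) ∂μ := by
        refine integral_congr_ae (Eventually.of_forall fun x => ?_)
        exact innerId (v x) x c
      have ha1 : Integrable (fun x => ‖c - x‖ ^ 2 + ‖v x - c‖ ^ 2) μ := hsq2.add hsq3
      have ha2 : Integrable (fun x => 2 * ⟪c, x - c⟫) μ := hIP2.const_mul 2
      have ha3 : Integrable (fun x => 2 * ⟪x - c, v x⟫) μ := hIP1.const_mul 2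
      rw [integral_add ha1 ha2, integral_add hsq2 hsq3, integral_const_mul, hcc,
        integral_add hsq1 ha3, integral_const_mul] at h1
      have h2 : 0 ≤ ∫ x, ‖v x - c‖ ^ 2 ∂μ :=
        integral_nonneg fun x => by positivity
      linarith
    -- final assembly
    have hSONJc : SONJ μ lam (fun _ => c) = ∫ x, ‖c - x‖ ^ 2 ∂μ := by
      simp [SONJ]
    rw [hSONJc]
    calc ∫ x, ‖c - x‖ ^ 2 ∂μ
        ≤ ∫ x, ‖v x - x‖ ^ 2 ∂μ + 2 * ∫ x, ⟪x - c, v x⟫ ∂μ := stepD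
      _ ≤ ∫ x, ‖v x - x‖ ^ 2 ∂μ + lam * ∫ x, ∫ y, ‖v x - v y‖ ∂μ ∂μ := by linarith
      _ = SONJ μ lam v := rfl
  have hmem : lam ∈ {l : ℝ | 0 ≤ l ∧ Cohesive μ l} :=
    ⟨hlam0, ⟨fun _ => c, hmin, c, Filter.EventuallyEq.rfl⟩⟩
  have hbdd : BddBelow {l : ℝ | 0 ≤ l ∧ Cohesive μ l} := ⟨0, fun x hx => hx.1⟩
  exact csInf_le hbdd hmem
end
end

section
/- Let μ be a nonzero finite Borel measure on ℝ^d with compact support, λ ≥ 0, and fix a Borel set A ⊂ ℝ^d with μ(A) > 0 such that μ|_A is λ-cohesive. Define u(x) := C_μ(A) if x ∈ A and u(x) := x if x ∉ A, so that M_u(μ) is the measure obtained from μ by consolidating all of the mass in A at C_μ(A). Then for μ-a.e. x, u_{μ,λ}(x) = u_{M_u(μ),λ}(u(x)). -/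
open MeasureTheory Filter Topology ProbabilityTheory
open scoped ENNReal NNReal symmDiff Classical RealInnerProductSpace

noncomputable section

namespace SONAux

variable {d : ℕ} {μ ν : Measure (Euc d)} {f g u w : Euc d → Euc d}

lemma normsq_integrable (hf : MemLp f 2 μ) (hg : MemLp g 2 μ) :
    Integrable (fun x => ‖f x - g x‖ ^ 2) μ :=
  (hf.sub hg).norm.integrable_sq

lemma inner_integrable (hf : MemLp f 2 μ) (hg : MemLp g 2 μ) :
    Integrable (fun x => ⟪f x, g x⟫) μ := by
  have h : (fun x => ⟪f x, g x⟫) = fun x =>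
      (‖f x + g x‖ ^ 2 - ‖f x‖ ^ 2 - ‖g x‖ ^ 2) / 2 := by
    funext x
    have := norm_add_sq_real (f x) (g x)
    ring_nf
    ring_nf at this
    linarith
  rw [h]
  exact ((((hf.add hg).norm.integrable_sq).sub hf.norm.integrable_sq).sub
    hg.norm.integrable_sq).div_const 2

/-- inner integrand of the TV term is integrable, for each fixed point. -/
lemma inner_tv_integrable (hu : Integrable u μ) (p : Euc d) [IsFiniteMeasure μ] :
    Integrable (fun y => ‖p - u y‖) μ := by
  have : Integrable (fun y => ‖p‖ + ‖u y‖) μ := (integrable_const _).add hu.norm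
  refine this.mono ((aestronglyMeasurable_const.sub hu.1).norm) ?_
  filter_upwards with y
  simp only [norm_norm]
  calc ‖p - u y‖ ≤ ‖p‖ + ‖u y‖ := norm_sub_le _ _
  _ ≤ ‖(‖p‖ + ‖u y‖)‖ := le_abs_self _

/-- The map `p ↦ ∫ ‖p - u y‖ dν` is Lipschitz (hence continuous). -/
lemma psi_lipschitz (hu : Integrable u ν) [IsFiniteMeasure ν] :
    LipschitzWith (ν Set.univ).toNNReal (fun p => ∫ y, ‖p - u y‖ ∂ν) := by
  have key : ∀ p q : Euc d, ∫ y, ‖p - u y‖ ∂ν - ∫ y, ‖q - u y‖ ∂ν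
      ≤ (ν Set.univ).toReal * ‖p - q‖ := by
    intro p q
    rw [← integral_sub (inner_tv_integrable hu p) (inner_tv_integrable hu q)]
    calc ∫ y, (‖p - u y‖ - ‖q - u y‖) ∂ν ≤ ∫ _, ‖p - q‖ ∂ν := by
          refine integral_mono (((inner_tv_integrable hu p)).sub
            (inner_tv_integrable hu q)) (integrable_const _) fun y => ?_
          have := norm_sub_norm_le (p - u y) (q - u y)
          simp only [sub_sub_sub_cancel_right] at this
          exact this
      _ = (ν Set.univ).toReal * ‖p - q‖ := by
          rw [integral_const, measureReal_def, smul_eq_mul]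
  refine LipschitzWith.of_dist_le_mul fun p q => ?_
  rw [Real.dist_eq, dist_eq_norm]
  have hco : ((ν Set.univ).toNNReal : ℝ) = (ν Set.univ).toReal := rfl
  rw [hco, abs_le]
  have h1 := key p q
  have h2 := key q p
  have h3 : ‖q - p‖ = ‖p - q‖ := by rw [← neg_sub, norm_neg]
  rw [h3] at h2
  constructor <;> linarith

/-- outer integrand of the TV term is integrable. -/
lemma outer_tv_integrable (hu : Integrable u μ) (hw : Integrable w ν)
    [IsFiniteMeasure μ] [IsFiniteMeasure ν] :
    Integrable (fun x => ∫ y, ‖u x - w y‖ ∂ν) μ := by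
  have hcont := (psi_lipschitz hw).continuous
  have haesm : AEStronglyMeasurable (fun x => ∫ y, ‖u x - w y‖ ∂ν) μ :=
    hcont.comp_aestronglyMeasurable hu.1
  have hbound : Integrable (fun x => (ν Set.univ).toReal * ‖u x‖ + ∫ y, ‖w y‖ ∂ν) μ :=
    (hu.norm.const_mul _).add (integrable_const _)
  refine hbound.mono haesm ?_
  filter_upwards with x
  have h1 : ∫ y, ‖u x - w y‖ ∂ν ≤ (ν Set.univ).toReal * ‖u x‖ + ∫ y, ‖w y‖ ∂ν := by
    calc ∫ y, ‖u x - w y‖ ∂ν ≤ ∫ y, (‖u x‖ + ‖w y‖) ∂ν := by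
          refine integral_mono (inner_tv_integrable hw _) ((integrable_const _).add hw.norm)
            fun y => norm_sub_le _ _
      _ = (ν Set.univ).toReal * ‖u x‖ + ∫ y, ‖w y‖ ∂ν := by
          rw [integral_add (integrable_const _) hw.norm, integral_const, measureReal_def, smul_eq_mul,
            mul_comm]
  have h2 : (0:ℝ) ≤ ∫ y, ‖u x - w y‖ ∂ν := integral_nonneg fun y => norm_nonneg _
  rw [Real.norm_eq_abs, Real.norm_eq_abs, abs_of_nonneg h2]
  exact h1.trans (le_abs_self _)


lemma sonj_congr [IsFiniteMeasure μ] (lam : ℝ) (h : u =ᵐ[μ] w) :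
    SONJ μ lam u = SONJ μ lam w := by
  unfold SONJ
  congr 1
  · refine integral_congr_ae (h.mono fun x hx => by simp only [hx])
  · congr 1
    refine integral_congr_ae ?_
    filter_upwards [h] with x hx
    rw [hx]
    refine integral_congr_ae (h.mono fun y hy => by simp only [hy])

lemma sonj_const (lam : ℝ) (b : Euc d) :
    SONJ μ lam (fun _ => b) = ∫ x, ‖b - x‖ ^ 2 ∂μ := by
  simp [SONJ]

lemma memLp_id [IsFiniteMeasure μ] (hsupp : ∃ K : Set (Euc d), IsCompact K ∧ μ Kᶜ = 0) :
    MemLp (fun x : Euc d => x) 2 μ := by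
  obtain ⟨K, hK, hKc⟩ := hsupp
  obtain ⟨R, hR⟩ := hK.isBounded.subset_closedBall 0
  have hb : ∀ᵐ x ∂μ, ‖(fun x : Euc d => x) x‖ ≤ R := by
    rw [ae_iff]
    refine measure_mono_null (fun x hx => ?_) hKc
    simp only [Set.mem_setOf_eq, not_le] at hx
    intro hxK
    have := hR hxK
    rw [Metric.mem_closedBall, dist_zero_right] at this
    exact absurd this (not_le.mpr hx)
  exact MemLp.mono_exponent (memLp_top_of_bound aestronglyMeasurable_id R hb) le_top

lemma parallelogram_pt (a b x : Euc d) :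
    ‖(2:ℝ)⁻¹ • (a + b) - x‖ ^ 2
      = 2⁻¹ * ‖a - x‖ ^ 2 + 2⁻¹ * ‖b - x‖ ^ 2 - 4⁻¹ * ‖a - b‖ ^ 2 := by
  have h1 : (2:ℝ)⁻¹ • (a + b) - x = (2:ℝ)⁻¹ • ((a - x) + (b - x)) := by module
  have h2 : a - b = (a - x) - (b - x) := by module
  rw [h1, h2, norm_smul]
  have h3 := norm_add_sq_real (a - x) (b - x)
  have h4 := norm_sub_sq_real (a - x) (b - x)
  have h5 : ‖(2:ℝ)⁻¹‖ = 2⁻¹ := by norm_num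
  rw [h5]
  nlinarith [h3, h4]

lemma sonmin_unique [IsFiniteMeasure μ] {lam : ℝ} (hlam : 0 ≤ lam)
    (hsupp : ∃ K : Set (Euc d), IsCompact K ∧ μ Kᶜ = 0)
    (hu : IsSONMin μ lam u) (hv : IsSONMin μ lam w) : u =ᵐ[μ] w := by
  set v := w with hvdef
  have hid : MemLp (fun x : Euc d => x) 2 μ := memLp_id hsupp
  have hu2 := hu.1
  have hv2 := hv.1
  set m : Euc d → Euc d := fun x => (2:ℝ)⁻¹ • (u x + v x) with hmdef
  have hm : MemLp m 2 μ := (hu2.add hv2).const_smul (2:ℝ)⁻¹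
  have hui : Integrable u μ := hu2.integrable one_le_two
  have hvi : Integrable v μ := hv2.integrable one_le_two
  have hmi : Integrable m μ := hm.integrable one_le_two
  -- quadratic identity
  have hq : ∫ x, ‖m x - x‖ ^ 2 ∂μ
      = 2⁻¹ * ∫ x, ‖u x - x‖ ^ 2 ∂μ + 2⁻¹ * ∫ x, ‖v x - x‖ ^ 2 ∂μ
        - 4⁻¹ * ∫ x, ‖u x - v x‖ ^ 2 ∂μ := by
    have : ∀ x, ‖m x - x‖ ^ 2
        = 2⁻¹ * ‖u x - x‖ ^ 2 + 2⁻¹ * ‖v x - x‖ ^ 2 - 4⁻¹ * ‖u x - v x‖ ^ 2 :=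
      fun x => parallelogram_pt (u x) (v x) x
    have i1 : Integrable (fun x => 2⁻¹ * ‖u x - x‖ ^ 2) μ :=
      (normsq_integrable hu2 hid).const_mul _
    have i2 : Integrable (fun x => 2⁻¹ * ‖v x - x‖ ^ 2) μ :=
      (normsq_integrable hv2 hid).const_mul _
    have i3 : Integrable (fun x => 4⁻¹ * ‖u x - v x‖ ^ 2) μ :=
      (normsq_integrable hu2 hv2).const_mul _
    have i12 : Integrable (fun x => 2⁻¹ * ‖u x - x‖ ^ 2 + 2⁻¹ * ‖v x - x‖ ^ 2) μ := i1.add i2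
    rw [integral_congr_ae (Eventually.of_forall this), integral_sub i12 i3,
      integral_add i1 i2, integral_const_mul, integral_const_mul, integral_const_mul]
  -- TV inequality
  have htv : ∫ x, ∫ y, ‖m x - m y‖ ∂μ ∂μ
      ≤ 2⁻¹ * ∫ x, ∫ y, ‖u x - u y‖ ∂μ ∂μ + 2⁻¹ * ∫ x, ∫ y, ‖v x - v y‖ ∂μ ∂μ := by
    have hinner : ∀ x, ∫ y, ‖m x - m y‖ ∂μ
        ≤ 2⁻¹ * ∫ y, ‖u x - u y‖ ∂μ + 2⁻¹ * ∫ y, ‖v x - v y‖ ∂μ := by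
      intro x
      have hptwise : ∀ y, ‖m x - m y‖ ≤ 2⁻¹ * ‖u x - u y‖ + 2⁻¹ * ‖v x - v y‖ := by
        intro y
        have : m x - m y = (2:ℝ)⁻¹ • ((u x - u y) + (v x - v y)) := by
          simp only [hmdef]; module
        rw [this, smul_add]
        calc ‖(2:ℝ)⁻¹ • (u x - u y) + (2:ℝ)⁻¹ • (v x - v y)‖
            ≤ ‖(2:ℝ)⁻¹ • (u x - u y)‖ + ‖(2:ℝ)⁻¹ • (v x - v y)‖ := norm_add_le _ _
          _ = 2⁻¹ * ‖u x - u y‖ + 2⁻¹ * ‖v x - v y‖ := by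
              rw [norm_smul, norm_smul]; norm_num
      calc ∫ y, ‖m x - m y‖ ∂μ
          ≤ ∫ y, (2⁻¹ * ‖u x - u y‖ + 2⁻¹ * ‖v x - v y‖) ∂μ := by
            refine integral_mono (inner_tv_integrable hmi _)
              (((inner_tv_integrable hui _).const_mul _).add
                ((inner_tv_integrable hvi _).const_mul _)) hptwise
        _ = 2⁻¹ * ∫ y, ‖u x - u y‖ ∂μ + 2⁻¹ * ∫ y, ‖v x - v y‖ ∂μ := by
            rw [integral_add ((inner_tv_integrable hui _).const_mul _)
              ((inner_tv_integrable hvi _).const_mul _), integral_const_mul,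
              integral_const_mul]
    calc ∫ x, ∫ y, ‖m x - m y‖ ∂μ ∂μ
        ≤ ∫ x, (2⁻¹ * ∫ y, ‖u x - u y‖ ∂μ + 2⁻¹ * ∫ y, ‖v x - v y‖ ∂μ) ∂μ := by
          refine integral_mono (outer_tv_integrable hmi hmi)
            (((outer_tv_integrable hui hui).const_mul _).add
              ((outer_tv_integrable hvi hvi).const_mul _)) hinner
      _ = _ := by
          rw [integral_add ((outer_tv_integrable hui hui).const_mul _)
            ((outer_tv_integrable hvi hvi).const_mul _), integral_const_mul,
            integral_const_mul]
  have hJm : SONJ μ lam m ≤ 2⁻¹ * SONJ μ lam u + 2⁻¹ * SONJ μ lam v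
      - 4⁻¹ * ∫ x, ‖u x - v x‖ ^ 2 ∂μ := by
    unfold SONJ
    have := mul_le_mul_of_nonneg_left htv hlam
    nlinarith [this]
  have h1 : SONJ μ lam u ≤ SONJ μ lam m := hu.2 m hm
  have h2 : SONJ μ lam u ≤ SONJ μ lam v := hu.2 v hv2
  have h3 : SONJ μ lam v ≤ SONJ μ lam u := hv.2 u hu2
  have h4 : ∫ x, ‖u x - v x‖ ^ 2 ∂μ ≤ 0 := by nlinarith
  have h5 : ∫ x, ‖u x - v x‖ ^ 2 ∂μ = 0 :=
    le_antisymm h4 (integral_nonneg fun x => sq_nonneg _)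
  have h6 := (integral_eq_zero_iff_of_nonneg (fun x => sq_nonneg _)
    (normsq_integrable hu2 hv2)).mp h5
  filter_upwards [h6] with x hx
  have : ‖u x - v x‖ ^ 2 = 0 := hx
  have : ‖u x - v x‖ = 0 := by nlinarith [norm_nonneg (u x - v x)]
  rwa [norm_eq_zero, sub_eq_zero] at this



lemma cohesive_const_min [IsFiniteMeasure μ] {lam : ℝ} (h : Cohesive μ lam) :
    ∃ c : Euc d, IsSONMin μ lam (fun _ => c) := by
  obtain ⟨u0, hmin, c, hae⟩ := h
  refine ⟨c, memLp_const c, fun v hv => ?_⟩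
  rw [← sonj_congr lam hae]
  exact hmin.2 v hv

lemma first_order [IsFiniteMeasure μ] {lam : ℝ} (hlam : 0 ≤ lam) {c : Euc d}
    (hc : IsSONMin μ lam (fun _ => c)) (hw : MemLp w 2 μ)
    (hid : MemLp (fun x : Euc d => x) 2 μ) :
    0 ≤ 2 * ∫ x, ⟪c - x, w x - c⟫ ∂μ + lam * ∫ x, ∫ y, ‖w x - w y‖ ∂μ ∂μ := by
  set I := ∫ x, ⟪c - x, w x - c⟫ ∂μ with hI
  set Q := ∫ x, ‖w x - c‖ ^ 2 ∂μ with hQ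
  set TV := ∫ x, ∫ y, ‖w x - w y‖ ∂μ ∂μ with hTV
  have hQ0 : 0 ≤ Q := integral_nonneg fun x => sq_nonneg _
  have key : ∀ t : ℝ, 0 < t → t ≤ 1 → 0 ≤ 2 * I + t * Q + lam * TV := by
    intro t ht0 ht1
    set ut : Euc d → Euc d := fun x => c + t • (w x - c) with hut
    have hut2 : MemLp ut 2 μ :=
      (memLp_const c).add ((hw.sub (memLp_const c)).const_smul t)
    have hle := hc.2 ut hut2
    have iq1 : Integrable (fun x => ‖c - x‖ ^ 2) μ := normsq_integrable (memLp_const c) hid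
    have iinner : Integrable (fun x => ⟪c - x, w x - c⟫) μ :=
      inner_integrable ((memLp_const c).sub hid) (hw.sub (memLp_const c))
    have iq2 : Integrable (fun x => ‖w x - c‖ ^ 2) μ := normsq_integrable hw (memLp_const c)
    have hquad : ∫ x, ‖ut x - x‖ ^ 2 ∂μ
        = ∫ x, ‖c - x‖ ^ 2 ∂μ + 2 * t * I + t ^ 2 * Q := by
      have hpt : ∀ x, ‖ut x - x‖ ^ 2
          = ‖c - x‖ ^ 2 + 2 * t * ⟪c - x, w x - c⟫ + t ^ 2 * ‖w x - c‖ ^ 2 := by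
        intro x
        have h0 : ut x - x = (c - x) + t • (w x - c) := by simp only [hut]; module
        rw [h0, norm_add_sq_real, real_inner_smul_right, norm_smul, Real.norm_eq_abs,
          mul_pow, sq_abs]
        ring
      have i12 : Integrable (fun x => ‖c - x‖ ^ 2 + 2 * t * ⟪c - x, w x - c⟫) μ :=
        iq1.add (iinner.const_mul _)
      rw [integral_congr_ae (Eventually.of_forall hpt), integral_add i12 (iq2.const_mul _),
        integral_add iq1 (iinner.const_mul _), integral_const_mul, integral_const_mul]
    have htv : ∫ x, ∫ y, ‖ut x - ut y‖ ∂μ ∂μ = t * TV := by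
      have hpt : ∀ x y : Euc d, ‖ut x - ut y‖ = t * ‖w x - w y‖ := by
        intro x y
        have h0 : ut x - ut y = t • (w x - w y) := by simp only [hut]; module
        rw [h0, norm_smul, Real.norm_eq_abs, abs_of_pos ht0]
      have h1 : (fun x => ∫ y, ‖ut x - ut y‖ ∂μ) = fun x => t * ∫ y, ‖w x - w y‖ ∂μ := by
        funext x
        simp only [hpt]
        rw [integral_const_mul]
      rw [h1, integral_const_mul]
    rw [SONJ, SONJ, hquad, htv] at hle
    simp only [sub_self, norm_zero, integral_zero, mul_zero, add_zero] at hle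
    have hle2 : 0 ≤ 2 * t * I + t ^ 2 * Q + lam * (t * TV) := by nlinarith [hle]
    have := mul_le_mul_of_nonneg_left hle2 (le_of_lt (inv_pos.mpr ht0))
    have ht' : t⁻¹ * t = 1 := inv_mul_cancel₀ (ne_of_gt ht0)
    nlinarith [this, sq_nonneg t, mul_pos ht0 ht0]
  by_contra hcon
  push_neg at hcon
  set eps := -(2 * I + lam * TV) with heps
  have heps0 : 0 < eps := by simp only [heps]; linarith
  set t := min 1 (eps / (2 * (Q + 1))) with htdef
  have ht0 : 0 < t := lt_min one_pos (div_pos heps0 (by linarith))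
  have ht1 : t ≤ 1 := min_le_left _ _
  have h2 := key t ht0 ht1
  have h3 : t * Q ≤ eps / 2 := by
    have : t ≤ eps / (2 * (Q + 1)) := min_le_right _ _
    have h4 : t * Q ≤ (eps / (2 * (Q + 1))) * Q :=
      mul_le_mul_of_nonneg_right this hQ0
    have h5 : (eps / (2 * (Q + 1))) * Q ≤ eps / 2 := by
      rw [div_mul_eq_mul_div, div_le_div_iff₀ (by linarith) (by norm_num)]
      nlinarith
    linarith
  linarith



lemma tv_swap {ρ σ : Measure (Euc d)} [IsFiniteMeasure ρ] [IsFiniteMeasure σ]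
    (hu : Integrable u ρ) (hv : Integrable w σ) :
    ∫ x, ∫ y, ‖u x - w y‖ ∂σ ∂ρ = ∫ y, ∫ x, ‖u x - w y‖ ∂ρ ∂σ := by
  obtain ⟨g, hgm, hg⟩ := hu.1
  obtain ⟨h, hhm, hh⟩ := hv.1
  have hgi : Integrable g ρ := hu.congr hg
  have hhi : Integrable h σ := hv.congr hh
  have key : ∫ x, ∫ y, ‖g x - h y‖ ∂σ ∂ρ = ∫ y, ∫ x, ‖g x - h y‖ ∂ρ ∂σ := by
    have hF : StronglyMeasurable (Function.uncurry fun x y => ‖g x - h y‖) :=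
      ((hgm.comp_measurable measurable_fst).sub (hhm.comp_measurable measurable_snd)).norm
    refine integral_integral_swap ?_
    refine (integrable_prod_iff hF.aestronglyMeasurable).mpr ⟨?_, ?_⟩
    · exact Eventually.of_forall fun x => inner_tv_integrable hhi (g x)
    · have : (fun x => ∫ y, ‖(Function.uncurry fun x y => ‖g x - h y‖) (x, y)‖ ∂σ)
          = fun x => ∫ y, ‖g x - h y‖ ∂σ := by
        funext x
        refine integral_congr_ae (Eventually.of_forall fun y => ?_)
        simp [Function.uncurry, norm_norm]
      rw [this]
      exact outer_tv_integrable hgi hhi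
  calc ∫ x, ∫ y, ‖u x - w y‖ ∂σ ∂ρ = ∫ x, ∫ y, ‖g x - h y‖ ∂σ ∂ρ := by
        refine integral_congr_ae ?_
        filter_upwards [hg] with x hx
        refine integral_congr_ae ?_
        filter_upwards [hh] with y hy
        rw [hx, hy]
    _ = ∫ y, ∫ x, ‖g x - h y‖ ∂ρ ∂σ := key
    _ = ∫ y, ∫ x, ‖u x - w y‖ ∂ρ ∂σ := by
        refine integral_congr_ae ?_
        filter_upwards [hh] with y hy
        refine integral_congr_ae ?_
        filter_upwards [hg] with x hx
        rw [hx, hy]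




lemma integral_restrict_singleton' (f : Euc d → ℝ) (c : Euc d) :
    ∫ x, f x ∂(μ.restrict {c}) = (μ {c}).toReal • f c := by
  rw [Measure.restrict_singleton, integral_smul_measure, integral_dirac]

lemma sonj_decomp [IsFiniteMeasure μ] (lam : ℝ) {A : Set (Euc d)} (hA : MeasurableSet A)
    (hid : MemLp (fun x : Euc d => x) 2 μ) (hf2 : MemLp f 2 μ) :
    SONJ μ lam f = (∫ x, ‖f x - x‖ ^ 2 ∂(μ.restrict A) + ∫ x, ‖f x - x‖ ^ 2 ∂(μ.restrict Aᶜ))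
      + lam * ((∫ x, ∫ y, ‖f x - f y‖ ∂(μ.restrict A) ∂(μ.restrict A)
            + ∫ x, ∫ y, ‖f x - f y‖ ∂(μ.restrict Aᶜ) ∂(μ.restrict A))
        + (∫ x, ∫ y, ‖f x - f y‖ ∂(μ.restrict A) ∂(μ.restrict Aᶜ)
            + ∫ x, ∫ y, ‖f x - f y‖ ∂(μ.restrict Aᶜ) ∂(μ.restrict Aᶜ))) := by
  set ρ := μ.restrict A with hρ
  set σ := μ.restrict Aᶜ with hσ
  have hsum : ρ + σ = μ := Measure.restrict_add_restrict_compl hA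
  have hfi : Integrable f μ := hf2.integrable one_le_two
  have hfiρ : Integrable f ρ := hfi.restrict
  have hfiσ : Integrable f σ := hfi.restrict
  have hq : Integrable (fun x => ‖f x - x‖ ^ 2) μ := normsq_integrable hf2 hid
  have hinner : ∀ x, ∫ y, ‖f x - f y‖ ∂μ
      = ∫ y, ‖f x - f y‖ ∂ρ + ∫ y, ‖f x - f y‖ ∂σ := by
    intro x
    rw [← hsum, integral_add_measure (inner_tv_integrable hfiρ (f x))
      (inner_tv_integrable hfiσ (f x))]
  have houter : (fun x => ∫ y, ‖f x - f y‖ ∂μ)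
      = fun x => ∫ y, ‖f x - f y‖ ∂ρ + ∫ y, ‖f x - f y‖ ∂σ := funext hinner
  unfold SONJ
  congr 1
  · rw [← hsum, integral_add_measure hq.restrict hq.restrict]
  · congr 1
    rw [houter]
    have io1 : Integrable (fun x => ∫ y, ‖f x - f y‖ ∂ρ) ρ :=
      outer_tv_integrable hfiρ hfiρ
    have io2 : Integrable (fun x => ∫ y, ‖f x - f y‖ ∂σ) ρ :=
      outer_tv_integrable hfiρ hfiσ
    have io3 : Integrable (fun x => ∫ y, ‖f x - f y‖ ∂ρ) σ :=
      outer_tv_integrable hfiσ hfiρ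
    have io4 : Integrable (fun x => ∫ y, ‖f x - f y‖ ∂σ) σ :=
      outer_tv_integrable hfiσ hfiσ
    have io12 : Integrable (fun x => ∫ y, ‖f x - f y‖ ∂ρ + ∫ y, ‖f x - f y‖ ∂σ) ρ := by
      exact io1.add io2
    have io34 : Integrable (fun x => ∫ y, ‖f x - f y‖ ∂ρ + ∫ y, ‖f x - f y‖ ∂σ) σ := by
      exact io3.add io4
    rw [← hsum, integral_add_measure io12 io34,
      integral_add io1 io2, integral_add io3 io4]

lemma convex_norm_bound {aA m : ℝ} (haA : 0 < aA) (hm : 0 < m) {b1 uc β : Euc d}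
    (hβ : (aA + m) • β = aA • b1 + m • uc) (p : Euc d) :
    (aA + m) * ‖β - p‖ ≤ aA * ‖b1 - p‖ + m * ‖uc - p‖ := by
  have h1 : (aA + m) • (β - p) = aA • (b1 - p) + m • (uc - p) := by
    rw [smul_sub, hβ]; module
  have h2 := norm_add_le (aA • (b1 - p)) (m • (uc - p))
  rw [← h1, norm_smul, norm_smul, norm_smul, Real.norm_eq_abs, Real.norm_eq_abs,
    Real.norm_eq_abs, abs_of_pos (by linarith), abs_of_pos haA, abs_of_pos hm] at h2
  exact h2

lemma convex_sq_bound {aA m a b t : ℝ} (haA : 0 < aA) (hm : 0 < m)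
    (ha : 0 ≤ a) (hb : 0 ≤ b) (ht : 0 ≤ t)
    (h : (aA + m) * t ≤ aA * a + m * b) : (aA + m) * t ^ 2 ≤ aA * a ^ 2 + m * b ^ 2 := by
  have hs : (0:ℝ) < aA + m := by linarith
  nlinarith [mul_le_mul h h (by positivity) (by positivity), sq_nonneg (a - b),
    mul_pos haA hm, sq_nonneg t]


lemma arith_combine {lam Qρ Qσ T1 T2 T3 T4 W a b : ℝ} (hlam : 0 ≤ lam)
    (h1 : W ≤ Qρ + lam * T1) (h2 : a ≤ T2) (h3 : b ≤ T3) :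
    (W + Qσ) + lam * ((0 + a) + (b + T4)) ≤ (Qρ + Qσ) + lam * ((T1 + T2) + (T3 + T4)) := by
  nlinarith [mul_le_mul_of_nonneg_left h2 hlam, mul_le_mul_of_nonneg_left h3 hlam]

lemma consolidate_on [IsFiniteMeasure μ] {lam : ℝ} (hlam : 0 ≤ lam)
    (hsupp : ∃ K : Set (Euc d), IsCompact K ∧ μ Kᶜ = 0)
    {A : Set (Euc d)} (hA : MeasurableSet A) (hApos : 0 < μ A)
    (hcoh : Cohesive (μ.restrict A) lam)
    (hu : IsSONMin μ lam u) :
    u =ᵐ[μ] fun x => if x ∈ A then (μ A).toReal⁻¹ • ∫ z in A, u z ∂μ else u x := by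
  classical
  set ρ := μ.restrict A with hρ
  set σ := μ.restrict Aᶜ with hσ
  have hsum : ρ + σ = μ := Measure.restrict_add_restrict_compl hA
  set aA := (μ A).toReal with haAdef
  have haA : 0 < aA := ENNReal.toReal_pos hApos.ne' (measure_ne_top μ A)
  set wbar : Euc d := aA⁻¹ • ∫ z, u z ∂ρ with hwbar
  have hid : MemLp (fun x : Euc d => x) 2 μ := memLp_id hsupp
  have hu2 := hu.1
  have hui : Integrable u μ := hu2.integrable one_le_two
  have huiρ : Integrable u ρ := hui.restrict
  have huiσ : Integrable u σ := hui.restrict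
  have hρuniv : ρ Set.univ = μ A := by rw [hρ, Measure.restrict_apply_univ]
  have havg : ∫ z, u z ∂ρ = aA • wbar := by
    rw [hwbar, smul_smul, mul_inv_cancel₀ (ne_of_gt haA), one_smul]
  -- (ii) type bound
  have hii : ∀ p : Euc d, aA * ‖p - wbar‖ ≤ ∫ z, ‖p - u z‖ ∂ρ := by
    intro p
    have h1 : ∫ z, (p - u z) ∂ρ = aA • (p - wbar) := by
      rw [integral_sub (integrable_const _) huiρ, integral_const, measureReal_def, hρuniv, havg, smul_sub]
    have h2 : ‖∫ z, (p - u z) ∂ρ‖ ≤ ∫ z, ‖p - u z‖ ∂ρ := norm_integral_le_integral_norm _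
    rw [h1, norm_smul, Real.norm_eq_abs, abs_of_pos haA] at h2
    exact h2
  -- first-order condition
  obtain ⟨c₀, hc₀⟩ := cohesive_const_min hcoh
  have hidρ : MemLp (fun x : Euc d => x) 2 ρ := hid.restrict A
  have hu2ρ : MemLp u 2 ρ := hu2.restrict A
  set w' : Euc d → Euc d := fun x => u x - wbar + c₀ with hw'
  have hw'2 : MemLp w' 2 ρ := (hu2ρ.sub (memLp_const wbar)).add (memLp_const c₀)
  have hstar0 := first_order hlam hc₀ hw'2 hidρ
  have he1 : (fun x => ⟪c₀ - x, w' x - c₀⟫) = fun x => ⟪c₀ - x, u x - wbar⟫ := by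
    funext x; simp only [hw', add_sub_cancel_right]
  have he2 : (fun x => ∫ y, ‖w' x - w' y‖ ∂ρ) = fun x => ∫ y, ‖u x - u y‖ ∂ρ := by
    funext x
    refine integral_congr_ae (Eventually.of_forall fun y => ?_)
    show ‖w' x - w' y‖ = ‖u x - u y‖
    have : w' x - w' y = u x - u y := by simp only [hw']; module
    rw [this]
  rw [he1, he2] at hstar0
  -- quadratic expansion over ρ
  have hzero : ∫ x, (u x - wbar) ∂ρ = 0 := by
    rw [integral_sub huiρ (integrable_const _), havg, integral_const, measureReal_def, hρuniv, sub_self]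
  have i_uw : Integrable (fun x => ‖u x - wbar‖ ^ 2) ρ :=
    normsq_integrable hu2ρ (memLp_const wbar)
  have i_in : Integrable (fun x => ⟪c₀ - x, u x - wbar⟫) ρ :=
    inner_integrable ((memLp_const c₀).sub hidρ) (hu2ρ.sub (memLp_const wbar))
  have i_wx : Integrable (fun x => ‖wbar - x‖ ^ 2) ρ :=
    normsq_integrable (memLp_const wbar) hidρ
  have hQsplit : ∫ x, ‖u x - x‖ ^ 2 ∂ρ
      = ∫ x, ‖u x - wbar‖ ^ 2 ∂ρ + 2 * ∫ x, ⟪c₀ - x, u x - wbar⟫ ∂ρ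
        + ∫ x, ‖wbar - x‖ ^ 2 ∂ρ := by
    have hpt : ∀ x, ‖u x - x‖ ^ 2
        = ‖u x - wbar‖ ^ 2 + 2 * (⟪u x - wbar, wbar - c₀⟫ + ⟪c₀ - x, u x - wbar⟫)
          + ‖wbar - x‖ ^ 2 := by
      intro x
      have h0 : u x - x = (u x - wbar) + (wbar - x) := by module
      rw [h0, norm_add_sq_real]
      have h1 : ⟪u x - wbar, wbar - x⟫
          = ⟪u x - wbar, wbar - c₀⟫ + ⟪u x - wbar, c₀ - x⟫ := by
        rw [← inner_add_right]
        congr 1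
        module
      rw [h1, real_inner_comm (u x - wbar) (c₀ - x)]
    have hinn1 : Integrable (fun x => ⟪u x - wbar, wbar - c₀⟫) ρ :=
      inner_integrable (hu2ρ.sub (memLp_const wbar)) (memLp_const _)
    have hzero1 : ∫ x, ⟪u x - wbar, wbar - c₀⟫ ∂ρ = 0 := by
      have : (fun x => ⟪u x - wbar, wbar - c₀⟫)
          = fun x => ⟪wbar - c₀, u x - wbar⟫ := by
        funext x; rw [real_inner_comm]
      have hsubi : Integrable (fun x => u x - wbar) ρ := by
        exact huiρ.sub (integrable_const _)
      rw [this, integral_inner hsubi (wbar - c₀), hzero, inner_zero_right]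
    have i_sum : Integrable (fun x => ⟪u x - wbar, wbar - c₀⟫ + ⟪c₀ - x, u x - wbar⟫) ρ := by
      exact hinn1.add i_in
    have i_2sum : Integrable (fun x =>
        2 * (⟪u x - wbar, wbar - c₀⟫ + ⟪c₀ - x, u x - wbar⟫)) ρ := i_sum.const_mul _
    have i12 : Integrable (fun x => ‖u x - wbar‖ ^ 2
        + 2 * (⟪u x - wbar, wbar - c₀⟫ + ⟪c₀ - x, u x - wbar⟫)) ρ := by
      exact i_uw.add i_2sum
    rw [integral_congr_ae (Eventually.of_forall hpt), integral_add i12 i_wx,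
      integral_add i_uw i_2sum, integral_const_mul,
      integral_add hinn1 i_in, hzero1, zero_add]
  have hkey1 : ∫ x, ‖wbar - x‖ ^ 2 ∂ρ
      ≤ ∫ x, ‖u x - x‖ ^ 2 ∂ρ + lam * ∫ x, ∫ y, ‖u x - u y‖ ∂ρ ∂ρ := by
    have h1 : 0 ≤ ∫ x, ‖u x - wbar‖ ^ 2 ∂ρ := integral_nonneg fun x => sq_nonneg _
    rw [hQsplit]
    linarith [hstar0]
  -- cross bounds
  have hcross1 : aA * ∫ x, ‖u x - wbar‖ ∂σ ≤ ∫ x, ∫ y, ‖u x - u y‖ ∂ρ ∂σ := by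
    have hmono : ∀ x, aA * ‖u x - wbar‖ ≤ ∫ y, ‖u x - u y‖ ∂ρ := fun x => hii (u x)
    calc aA * ∫ x, ‖u x - wbar‖ ∂σ = ∫ x, aA * ‖u x - wbar‖ ∂σ := by
          rw [integral_const_mul]
      _ ≤ ∫ x, ∫ y, ‖u x - u y‖ ∂ρ ∂σ := by
          refine integral_mono (((huiσ.sub (integrable_const _)).norm).const_mul _)
            (outer_tv_integrable huiσ huiρ) hmono
  have hcross2 : aA * ∫ y, ‖wbar - u y‖ ∂σ ≤ ∫ x, ∫ y, ‖u x - u y‖ ∂σ ∂ρ := by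
    rw [tv_swap huiρ huiσ]
    have hmono : ∀ y, aA * ‖wbar - u y‖ ≤ ∫ x, ‖u x - u y‖ ∂ρ := by
      intro y
      have h1 := hii (u y)
      have h2 : ‖wbar - u y‖ = ‖u y - wbar‖ := norm_sub_rev _ _
      have h3 : ∫ z, ‖u y - u z‖ ∂ρ = ∫ x, ‖u x - u y‖ ∂ρ := by
        refine integral_congr_ae (Eventually.of_forall fun z => ?_)
        exact norm_sub_rev _ _
      rw [h2]
      rw [h3] at h1
      exact h1
    calc aA * ∫ y, ‖wbar - u y‖ ∂σ = ∫ y, aA * ‖wbar - u y‖ ∂σ := by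
          rw [integral_const_mul]
      _ ≤ _ := by
          refine integral_mono ((inner_tv_integrable huiσ wbar).const_mul _) ?_ hmono
          have : (fun y => ∫ x, ‖u x - u y‖ ∂ρ) = fun y => ∫ x, ‖u y - u x‖ ∂ρ := by
            funext y
            exact integral_congr_ae (Eventually.of_forall fun x => norm_sub_rev _ _)
          rw [this]
          exact outer_tv_integrable huiσ huiρ
  -- the competitor
  set v : Euc d → Euc d := fun x => if x ∈ A then wbar else u x with hv
  have hv2 : MemLp v 2 μ := by
    obtain ⟨g, hgm, hg⟩ := hu2.1
    have haesm : AEStronglyMeasurable v μ := by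
      refine ⟨fun x => if x ∈ A then wbar else g x,
        StronglyMeasurable.ite hA stronglyMeasurable_const hgm, ?_⟩
      filter_upwards [hg] with x hx
      by_cases hxa : x ∈ A <;> simp [hv, hxa, hx]
    have hgmem : MemLp (fun x => ‖wbar‖ + ‖u x‖) 2 μ := by
      exact (memLp_const ‖wbar‖).add hu2.norm
    refine MemLp.of_le hgmem haesm ?_
    filter_upwards with x
    have h0 : (0:ℝ) ≤ ‖wbar‖ + ‖u x‖ := by positivity
    rw [Real.norm_eq_abs, abs_of_nonneg h0]
    by_cases hxa : x ∈ A
    · simp only [hv, if_pos hxa]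
      nlinarith [norm_nonneg (u x)]
    · simp only [hv, if_neg hxa]
      nlinarith [norm_nonneg wbar]
  have hvi : Integrable v μ := hv2.integrable one_le_two
  have hviρ : Integrable v ρ := hvi.restrict
  have hviσ : Integrable v σ := hvi.restrict
  -- a.e. descriptions
  have haeρ : ∀ᵐ x ∂ρ, v x = wbar := by
    filter_upwards [ae_restrict_mem hA] with x hx
    simp [hv, hx]
  have haeσ : ∀ᵐ x ∂σ, v x = u x := by
    filter_upwards [ae_restrict_mem hA.compl] with x hx
    simp only [hv, if_neg hx]
  -- decomposition of SONJ
  have hdecomp : ∀ f : Euc d → Euc d, MemLp f 2 μ →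
      SONJ μ lam f = (∫ x, ‖f x - x‖ ^ 2 ∂ρ + ∫ x, ‖f x - x‖ ^ 2 ∂σ)
        + lam * ((∫ x, ∫ y, ‖f x - f y‖ ∂ρ ∂ρ + ∫ x, ∫ y, ‖f x - f y‖ ∂σ ∂ρ)
          + (∫ x, ∫ y, ‖f x - f y‖ ∂ρ ∂σ + ∫ x, ∫ y, ‖f x - f y‖ ∂σ ∂σ)) :=
    fun f hf2 => sonj_decomp lam hA hid hf2
  -- compute pieces for v
  have hv_qρ : ∫ x, ‖v x - x‖ ^ 2 ∂ρ = ∫ x, ‖wbar - x‖ ^ 2 ∂ρ := by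
    refine integral_congr_ae ?_
    filter_upwards [haeρ] with x hx
    rw [hx]
  have hv_qσ : ∫ x, ‖v x - x‖ ^ 2 ∂σ = ∫ x, ‖u x - x‖ ^ 2 ∂σ := by
    refine integral_congr_ae ?_
    filter_upwards [haeσ] with x hx
    rw [hx]
  have hv_T1 : ∫ x, ∫ y, ‖v x - v y‖ ∂ρ ∂ρ = 0 := by
    have : ∀ᵐ x ∂ρ, ∫ y, ‖v x - v y‖ ∂ρ = 0 := by
      filter_upwards [haeρ] with x hx
      have : ∀ᵐ y ∂ρ, ‖v x - v y‖ = 0 := by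
        filter_upwards [haeρ] with y hy
        rw [hx, hy, sub_self, norm_zero]
      rw [integral_congr_ae this, integral_zero]
    rw [integral_congr_ae this, integral_zero]
  have hv_T2 : ∫ x, ∫ y, ‖v x - v y‖ ∂σ ∂ρ = aA * ∫ y, ‖wbar - u y‖ ∂σ := by
    have : ∀ᵐ x ∂ρ, ∫ y, ‖v x - v y‖ ∂σ = ∫ y, ‖wbar - u y‖ ∂σ := by
      filter_upwards [haeρ] with x hx
      refine integral_congr_ae ?_
      filter_upwards [haeσ] with y hy
      rw [hx, hy]
    rw [integral_congr_ae this, integral_const, measureReal_def, hρuniv, smul_eq_mul]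
  have hv_T3 : ∫ x, ∫ y, ‖v x - v y‖ ∂ρ ∂σ = aA * ∫ x, ‖u x - wbar‖ ∂σ := by
    have : ∀ᵐ x ∂σ, ∫ y, ‖v x - v y‖ ∂ρ = aA * ‖u x - wbar‖ := by
      filter_upwards [haeσ] with x hx
      have h1 : ∀ᵐ y ∂ρ, ‖v x - v y‖ = ‖u x - wbar‖ := by
        filter_upwards [haeρ] with y hy
        rw [hx, hy]
      rw [integral_congr_ae h1, integral_const, measureReal_def, hρuniv, smul_eq_mul]
    rw [integral_congr_ae this, integral_const_mul]
  have hv_T4 : ∫ x, ∫ y, ‖v x - v y‖ ∂σ ∂σ = ∫ x, ∫ y, ‖u x - u y‖ ∂σ ∂σ := by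
    refine integral_congr_ae ?_
    filter_upwards [haeσ] with x hx
    refine integral_congr_ae ?_
    filter_upwards [haeσ] with y hy
    rw [hx, hy]
  -- conclude J(v) ≤ J(u)
  have hJvu : SONJ μ lam v ≤ SONJ μ lam u := by
    rw [hdecomp u hu2, hdecomp v hv2, hv_qρ, hv_qσ, hv_T1, hv_T2, hv_T3, hv_T4]
    exact arith_combine hlam hkey1 hcross2 hcross1
  have hle' : SONJ μ lam u ≤ SONJ μ lam v := hu.2 v hv2
  have heq : SONJ μ lam v = SONJ μ lam u := le_antisymm hJvu hle'
  have hvmin : IsSONMin μ lam v := ⟨hv2, fun f hf => by rw [heq]; exact hu.2 f hf⟩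
  exact sonmin_unique hlam hsupp hu hvmin



lemma memLp_ite [IsFiniteMeasure μ] {A : Set (Euc d)} (hA : MeasurableSet A) (b : Euc d)
    (hu2 : MemLp u 2 μ) : MemLp (fun x => if x ∈ A then b else u x) 2 μ := by
  classical
  obtain ⟨g, hgm, hg⟩ := hu2.1
  have haesm : AEStronglyMeasurable (fun x => if x ∈ A then b else u x) μ := by
    refine ⟨fun x => if x ∈ A then b else g x,
      StronglyMeasurable.ite hA stronglyMeasurable_const hgm, ?_⟩
    filter_upwards [hg] with x hx
    by_cases hxa : x ∈ A <;> simp [hxa, hx]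
  have hgmem : MemLp (fun x => ‖b‖ + ‖u x‖) 2 μ := by
    exact (memLp_const ‖b‖).add hu2.norm
  refine MemLp.of_le hgmem haesm ?_
  filter_upwards with x
  have h0 : (0:ℝ) ≤ ‖b‖ + ‖u x‖ := by positivity
  rw [Real.norm_eq_abs, abs_of_nonneg h0]
  by_cases hxa : x ∈ A
  · simp only [if_pos hxa]
    nlinarith [norm_nonneg (u x)]
  · simp only [if_neg hxa]
    nlinarith [norm_nonneg b]

lemma arith_combine2 {lam Qv Qu Qσ T1 T2 T3 T2' T3' T4 : ℝ} (hlam : 0 ≤ lam)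
    (hQ : Qv ≤ Qu) (h1 : 0 ≤ T1) (h2 : T2' ≤ T2) (h3 : T3' ≤ T3) :
    (Qv + Qσ) + lam * ((0 + T2') + (T3' + T4)) ≤ (Qu + Qσ) + lam * ((T1 + T2) + (T3 + T4)) := by
  nlinarith [mul_le_mul_of_nonneg_left h2 hlam, mul_le_mul_of_nonneg_left h3 hlam,
    mul_nonneg hlam h1]

lemma centroid_expansion [IsFiniteMeasure μ] {A : Set (Euc d)} {c : Euc d}
    (hidA : MemLp (fun x : Euc d => x) 2 (μ.restrict A))
    (hcent : ∫ x, x ∂(μ.restrict A) = (μ A).toReal • c) (b : Euc d) :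
    ∫ x, ‖b - x‖ ^ 2 ∂(μ.restrict A)
      = (μ A).toReal * ‖b - c‖ ^ 2 + ∫ x, ‖c - x‖ ^ 2 ∂(μ.restrict A) := by
  set ρ := μ.restrict A with hρ
  have hρuniv : ρ Set.univ = μ A := by rw [hρ, Measure.restrict_apply_univ]
  have hidint : Integrable (fun x : Euc d => x) ρ := hidA.integrable one_le_two
  have hzero : ∫ x, (c - x) ∂ρ = 0 := by
    have : Integrable (fun x : Euc d => c - x) ρ := by
      exact (integrable_const _).sub hidint
    rw [integral_sub (integrable_const _) hidint, hcent, integral_const, measureReal_def, hρuniv, sub_self]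
  have hpt : ∀ x, ‖b - x‖ ^ 2 = ‖b - c‖ ^ 2 + 2 * ⟪b - c, c - x⟫ + ‖c - x‖ ^ 2 := by
    intro x
    have h0 : b - x = (b - c) + (c - x) := by module
    rw [h0, norm_add_sq_real]
  have hin : Integrable (fun x => ⟪b - c, c - x⟫) ρ :=
    inner_integrable (memLp_const _) ((memLp_const c).sub hidA)
  have hsq : Integrable (fun x => ‖c - x‖ ^ 2) ρ :=
    normsq_integrable (memLp_const c) hidA
  have hzin : ∫ x, ⟪b - c, c - x⟫ ∂ρ = 0 := by
    have hsubi : Integrable (fun x => c - x) ρ := by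
      exact (integrable_const _).sub hidint
    rw [integral_inner hsubi (b - c), hzero, inner_zero_right]
  have i12 : Integrable (fun x => ‖b - c‖ ^ 2 + 2 * ⟪b - c, c - x⟫) ρ := by
    exact (integrable_const _).add (hin.const_mul _)
  rw [integral_congr_ae (Eventually.of_forall hpt), integral_add i12 hsq,
    integral_add (integrable_const _) (hin.const_mul _), integral_const_mul, hzin,
    mul_zero, add_zero, integral_const, measureReal_def, hρuniv, smul_eq_mul]

lemma merge_atom [IsFiniteMeasure μ] {lam : ℝ} (hlam : 0 ≤ lam)
    (hsupp : ∃ K : Set (Euc d), IsCompact K ∧ μ Kᶜ = 0)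
    {A : Set (Euc d)} (hA : MeasurableSet A) (hApos : 0 < μ A)
    {c b1 : Euc d} (hcA : c ∉ A) (hm0 : 0 < μ {c})
    (hcent : ∫ x, x ∂(μ.restrict A) = (μ A).toReal • c)
    (hu : IsSONMin μ lam u)
    (hb1 : ∀ᵐ x ∂(μ.restrict A), u x = b1) :
    u c = b1 := by
  classical
  set S : Set (Euc d) := A ∪ {c} with hS
  have hSm : MeasurableSet S := hA.union (measurableSet_singleton c)
  have hdisj : Disjoint A {c} := Set.disjoint_singleton_right.mpr hcA
  have hid : MemLp (fun x : Euc d => x) 2 μ := memLp_id hsupp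
  set ρ := μ.restrict A with hρ
  set δ := μ.restrict ({c} : Set (Euc d)) with hδ
  set τ := μ.restrict S with hτ
  set σ := μ.restrict Sᶜ with hσ
  have hsplitS : τ = ρ + δ := Measure.restrict_union hdisj (measurableSet_singleton c)
  set aA := (μ A).toReal with haAdef
  set m := (μ ({c} : Set (Euc d))).toReal with hmdef
  have haA : 0 < aA := ENNReal.toReal_pos hApos.ne' (measure_ne_top μ A)
  have hm : 0 < m := ENNReal.toReal_pos hm0.ne' (measure_ne_top μ _)
  have hμS : (μ S).toReal = aA + m := by
    rw [hS, measure_union hdisj (measurableSet_singleton c),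
      ENNReal.toReal_add (measure_ne_top μ A) (measure_ne_top μ _)]
  set s := aA + m with hsdef
  have hs : 0 < s := by positivity
  set b2 := u c with hb2
  set β := s⁻¹ • (aA • b1 + m • b2) with hβdef
  have hβ : s • β = aA • b1 + m • b2 := by
    rw [hβdef, smul_smul, mul_inv_cancel₀ hs.ne', one_smul]
  set v2 : Euc d → Euc d := fun x => @ite _ (x ∈ S) (Classical.propDecidable _) β (u x) with hv2def
  have hu2 := hu.1
  have hui : Integrable u μ := hu2.integrable one_le_two
  have hv22 : MemLp v2 2 μ := by rw [hv2def]; exact memLp_ite hSm β hu2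
  have hv2i : Integrable v2 μ := hv22.integrable one_le_two
  -- a.e. facts
  have hδae : ∀ᵐ x ∂δ, x = c := by
    filter_upwards [ae_restrict_mem (measurableSet_singleton c)] with x hx
    exact hx
  have huδ : ∀ᵐ x ∂δ, u x = b2 := by
    filter_upwards [hδae] with x hx; rw [hx]
  have haeτ : ∀ᵐ x ∂τ, v2 x = β := by
    filter_upwards [ae_restrict_mem hSm] with x hx
    simp [hv2def, hx]
  have haeσ : ∀ᵐ x ∂σ, v2 x = u x := by
    filter_upwards [ae_restrict_mem hSm.compl] with x hx
    simp only [hv2def, if_neg hx]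
  have huρv : ∀ᵐ x ∂ρ, v2 x = β := by
    filter_upwards [ae_restrict_mem hA] with x hx
    have : x ∈ S := Set.mem_union_left _ hx
    simp [hv2def, this]
  -- integrabilities
  have huiρ : Integrable u ρ := hui.restrict
  have huiδ : Integrable u δ := hui.restrict
  have huiτ : Integrable u τ := hui.restrict
  have huiσ : Integrable u σ := hui.restrict
  have hv2iτ : Integrable v2 τ := hv2i.restrict
  have hv2iσ : Integrable v2 σ := hv2i.restrict
  have hidτ : MemLp (fun x : Euc d => x) 2 τ := hid.restrict S
  have hidρ : MemLp (fun x : Euc d => x) 2 ρ := hid.restrict A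
  have hu2τ : MemLp u 2 τ := hu2.restrict S
  have hu2ρ : MemLp u 2 ρ := hu2.restrict A
  have hρuniv : ρ Set.univ = μ A := by rw [hρ, Measure.restrict_apply_univ]
  have hδuniv : δ Set.univ = μ {c} := by rw [hδ, Measure.restrict_apply_univ]
  -- quadratic pieces
  have hQu : ∫ x, ‖u x - x‖ ^ 2 ∂τ
      = (aA * ‖b1 - c‖ ^ 2 + ∫ x, ‖c - x‖ ^ 2 ∂ρ) + m * ‖b2 - c‖ ^ 2 := by
    rw [hsplitS, integral_add_measure ((normsq_integrable hu2 hid).restrict)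
      ((normsq_integrable hu2 hid).restrict)]
    congr 1
    · rw [← centroid_expansion hidρ hcent b1]
      refine integral_congr_ae ?_
      filter_upwards [hb1] with x hx
      rw [hx]
    · have h1 : ∫ x, ‖u x - x‖ ^ 2 ∂δ = ∫ x, ‖b2 - x‖ ^ 2 ∂δ := by
        refine integral_congr_ae ?_
        filter_upwards [huδ] with x hx
        rw [hx]
      rw [h1, hδ, integral_restrict_singleton' (fun x => ‖b2 - x‖ ^ 2) c, smul_eq_mul]
  have hQv : ∫ x, ‖v2 x - x‖ ^ 2 ∂τ
      = (aA * ‖β - c‖ ^ 2 + ∫ x, ‖c - x‖ ^ 2 ∂ρ) + m * ‖β - c‖ ^ 2 := by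
    rw [hsplitS, integral_add_measure ((normsq_integrable hv22 hid).restrict)
      ((normsq_integrable hv22 hid).restrict)]
    congr 1
    · rw [← centroid_expansion hidρ hcent β]
      refine integral_congr_ae ?_
      filter_upwards [huρv] with x hx
      rw [hx]
    · have h1 : ∫ x, ‖v2 x - x‖ ^ 2 ∂δ = ∫ x, ‖β - x‖ ^ 2 ∂δ := by
        refine integral_congr_ae ?_
        filter_upwards [hδae] with x hx
        have : x ∈ S := by rw [hx]; exact Set.mem_union_right _ rfl
        simp only [hv2def, if_pos this]
      rw [h1, hδ, integral_restrict_singleton' (fun x => ‖β - x‖ ^ 2) c, smul_eq_mul]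
  have hQcomp : ∫ x, ‖v2 x - x‖ ^ 2 ∂τ ≤ ∫ x, ‖u x - x‖ ^ 2 ∂τ := by
    rw [hQu, hQv]
    have hcn := convex_norm_bound haA hm hβ c
    have hcs := convex_sq_bound haA hm (norm_nonneg (b1 - c)) (norm_nonneg (b2 - c))
      (norm_nonneg (β - c)) hcn
    nlinarith [hcs]
  -- TV pieces
  have hTττv : ∫ x, ∫ y, ‖v2 x - v2 y‖ ∂τ ∂τ = 0 := by
    have h1 : ∀ᵐ x ∂τ, ∫ y, ‖v2 x - v2 y‖ ∂τ = 0 := by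
      filter_upwards [haeτ] with x hx
      have h2 : ∀ᵐ y ∂τ, ‖v2 x - v2 y‖ = 0 := by
        filter_upwards [haeτ] with y hy
        rw [hx, hy, sub_self, norm_zero]
      rw [integral_congr_ae h2, integral_zero]
    rw [integral_congr_ae h1, integral_zero]
  have hTττu : 0 ≤ ∫ x, ∫ y, ‖u x - u y‖ ∂τ ∂τ :=
    integral_nonneg fun x => integral_nonneg fun y => norm_nonneg _
  -- cross 1 : outer τ, inner σ
  have hTτσu : ∫ x, ∫ y, ‖u x - u y‖ ∂σ ∂τ
      = aA * ∫ y, ‖b1 - u y‖ ∂σ + m * ∫ y, ‖b2 - u y‖ ∂σ := by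
    rw [hsplitS, integral_add_measure (outer_tv_integrable hui.restrict huiσ)
      (outer_tv_integrable hui.restrict huiσ)]
    congr 1
    · have h1 : ∀ᵐ x ∂ρ, ∫ y, ‖u x - u y‖ ∂σ = ∫ y, ‖b1 - u y‖ ∂σ := by
        filter_upwards [hb1] with x hx
        rw [hx]
      rw [integral_congr_ae h1, integral_const, measureReal_def, hρuniv, smul_eq_mul]
    · have h1 : ∀ᵐ x ∂δ, ∫ y, ‖u x - u y‖ ∂σ = ∫ y, ‖b2 - u y‖ ∂σ := by
        filter_upwards [huδ] with x hx
        rw [hx]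
      rw [integral_congr_ae h1, integral_const, measureReal_def, hδuniv, smul_eq_mul]
  have hTτσv : ∫ x, ∫ y, ‖v2 x - v2 y‖ ∂σ ∂τ = s * ∫ y, ‖β - u y‖ ∂σ := by
    have h1 : ∀ᵐ x ∂τ, ∫ y, ‖v2 x - v2 y‖ ∂σ = ∫ y, ‖β - u y‖ ∂σ := by
      filter_upwards [haeτ] with x hx
      refine integral_congr_ae ?_
      filter_upwards [haeσ] with y hy
      rw [hx, hy]
    rw [integral_congr_ae h1, integral_const, measureReal_def, hτ, Measure.restrict_apply_univ, hμS,
      smul_eq_mul]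
  have hTτσcomp : ∫ x, ∫ y, ‖v2 x - v2 y‖ ∂σ ∂τ ≤ ∫ x, ∫ y, ‖u x - u y‖ ∂σ ∂τ := by
    rw [hTτσu, hTτσv]
    have hpt : ∀ y, s * ‖β - u y‖ ≤ aA * ‖b1 - u y‖ + m * ‖b2 - u y‖ :=
      fun y => convex_norm_bound haA hm hβ (u y)
    have hint : s * ∫ y, ‖β - u y‖ ∂σ ≤ ∫ y, (aA * ‖b1 - u y‖ + m * ‖b2 - u y‖) ∂σ := by
      rw [← integral_const_mul]
      refine integral_mono ((inner_tv_integrable huiσ β).const_mul _)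
        (((inner_tv_integrable huiσ b1).const_mul _).add
          ((inner_tv_integrable huiσ b2).const_mul _)) hpt
    rw [integral_add ((inner_tv_integrable huiσ b1).const_mul _)
      ((inner_tv_integrable huiσ b2).const_mul _), integral_const_mul,
      integral_const_mul] at hint
    exact hint
  -- cross 2 : outer σ, inner τ
  have hinneru : ∀ x, ∫ y, ‖u x - u y‖ ∂τ = aA * ‖u x - b1‖ + m * ‖u x - b2‖ := by
    intro x
    rw [hsplitS, integral_add_measure (inner_tv_integrable huiρ (u x))
      (inner_tv_integrable huiδ (u x))]
    congr 1
    · have h1 : ∀ᵐ y ∂ρ, ‖u x - u y‖ = ‖u x - b1‖ := by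
        filter_upwards [hb1] with y hy
        rw [hy]
      rw [integral_congr_ae h1, integral_const, measureReal_def, hρuniv, smul_eq_mul]
    · have h1 : ∀ᵐ y ∂δ, ‖u x - u y‖ = ‖u x - b2‖ := by
        filter_upwards [huδ] with y hy
        rw [hy]
      rw [integral_congr_ae h1, integral_const, measureReal_def, hδuniv, smul_eq_mul]
  have hTστu : ∫ x, ∫ y, ‖u x - u y‖ ∂τ ∂σ
      = ∫ x, (aA * ‖u x - b1‖ + m * ‖u x - b2‖) ∂σ :=
    integral_congr_ae (Eventually.of_forall fun x => hinneru x)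
  have hTστv : ∫ x, ∫ y, ‖v2 x - v2 y‖ ∂τ ∂σ = ∫ x, s * ‖u x - β‖ ∂σ := by
    refine integral_congr_ae ?_
    filter_upwards [haeσ] with x hx
    have h1 : ∀ᵐ y ∂τ, ‖v2 x - v2 y‖ = ‖u x - β‖ := by
      filter_upwards [haeτ] with y hy
      rw [hx, hy]
    rw [integral_congr_ae h1, integral_const, measureReal_def, hτ, Measure.restrict_apply_univ, hμS,
      smul_eq_mul]
  have hTστcomp : ∫ x, ∫ y, ‖v2 x - v2 y‖ ∂τ ∂σ ≤ ∫ x, ∫ y, ‖u x - u y‖ ∂τ ∂σ := by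
    rw [hTστu, hTστv]
    have hpt : ∀ x, s * ‖u x - β‖ ≤ aA * ‖u x - b1‖ + m * ‖u x - b2‖ := by
      intro x
      have h1 := convex_norm_bound haA hm hβ (u x)
      rw [norm_sub_rev β (u x), norm_sub_rev b1 (u x), norm_sub_rev b2 (u x)] at h1
      exact h1
    have i1 : Integrable (fun x => s * ‖u x - β‖) σ := by
      exact ((huiσ.sub (integrable_const _)).norm).const_mul _
    have i2 : Integrable (fun x => aA * ‖u x - b1‖ + m * ‖u x - b2‖) σ := by
      exact (((huiσ.sub (integrable_const _)).norm).const_mul _).add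
        (((huiσ.sub (integrable_const _)).norm).const_mul _)
    exact integral_mono i1 i2 hpt
  -- σσ and quadratic σ pieces are equal
  have hQσ : ∫ x, ‖v2 x - x‖ ^ 2 ∂σ = ∫ x, ‖u x - x‖ ^ 2 ∂σ := by
    refine integral_congr_ae ?_
    filter_upwards [haeσ] with x hx
    rw [hx]
  have hTσσ : ∫ x, ∫ y, ‖v2 x - v2 y‖ ∂σ ∂σ = ∫ x, ∫ y, ‖u x - u y‖ ∂σ ∂σ := by
    refine integral_congr_ae ?_
    filter_upwards [haeσ] with x hx
    refine integral_congr_ae ?_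
    filter_upwards [haeσ] with y hy
    rw [hx, hy]
  -- combine
  have hJ : SONJ μ lam v2 ≤ SONJ μ lam u := by
    rw [sonj_decomp lam hSm hid hu2, sonj_decomp lam hSm hid hv22, hTττv, hQσ, hTσσ]
    exact arith_combine2 hlam hQcomp hTττu hTτσcomp hTστcomp
  have hle' : SONJ μ lam u ≤ SONJ μ lam v2 := hu.2 v2 hv22
  have heq : SONJ μ lam v2 = SONJ μ lam u := le_antisymm hJ hle'
  have hv2min : IsSONMin μ lam v2 := ⟨hv22, fun f hf => by rw [heq]; exact hu.2 f hf⟩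
  have haeuv : u =ᵐ[μ] v2 := sonmin_unique hlam hsupp hu hv2min
  -- extract values
  have hρne : ρ ≠ 0 := by
    intro h
    have := hρuniv
    rw [h] at this
    simp at this
    exact hApos.ne' this.symm
  have hδne : δ ≠ 0 := by
    intro h
    have := hδuniv
    rw [h] at this
    simp at this
    exact hm0.ne' this.symm
  haveI : (ae ρ).NeBot := ae_neBot.mpr hρne
  haveI : (ae δ).NeBot := ae_neBot.mpr hδne
  have h1 : ∀ᵐ x ∂ρ, b1 = β := by
    filter_upwards [hb1, huρv, ae_restrict_of_ae (s := A) haeuv] with x hx1 hx2 hx3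
    rw [← hx1, hx3, hx2]
  have h2 : ∀ᵐ x ∂δ, u c = β := by
    filter_upwards [hδae, ae_restrict_of_ae (s := {c}) haeuv] with x hx1 hx2
    have hcS : c ∈ S := Set.mem_union_right _ rfl
    rw [← hx1, hx2, hx1]
    simp [hv2def, hcS]
  obtain ⟨x1, hx1⟩ := h1.exists
  obtain ⟨x2, hx2⟩ := h2.exists
  rw [hb2, hx2, ← hx1]




lemma memLp_comp_map {T' : Euc d → Euc d} (hT : Measurable T') {w : Euc d → Euc d}
    (hw : MemLp w 2 (Measure.map T' μ)) : MemLp (fun x => w (T' x)) 2 μ := by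
  have h1 : AEStronglyMeasurable (fun x => w (T' x)) μ :=
    hw.1.comp_aemeasurable hT.aemeasurable
  refine ⟨h1, ?_⟩
  have h2 := eLpNorm_map_measure (p := 2) (μ := μ) hw.1 hT.aemeasurable
  have h3 : eLpNorm (w ∘ T') 2 μ < ⊤ := by rw [← h2]; exact hw.2
  exact h3

lemma map_consolidate {A : Set (Euc d)} (hA : MeasurableSet A) (c : Euc d) :
    Measure.map (fun x => if x ∈ A then c else x) μ
      = μ A • Measure.dirac c + μ.restrict Aᶜ := by
  classical
  have hT : Measurable (fun x : Euc d => if x ∈ A then c else x) :=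
    Measurable.ite hA measurable_const measurable_id
  have hsum : μ.restrict A + μ.restrict Aᶜ = μ := Measure.restrict_add_restrict_compl hA
  conv_lhs => rw [← hsum]
  rw [Measure.map_add _ _ hT]
  congr 1
  · have h1 : Measure.map (fun x : Euc d => if x ∈ A then c else x) (μ.restrict A)
        = Measure.map (fun _ => c) (μ.restrict A) := by
      refine Measure.map_congr ?_
      filter_upwards [ae_restrict_mem hA] with x hx
      simp [hx]
    rw [h1, Measure.map_const, Measure.restrict_apply_univ]
  · have h1 : Measure.map (fun x : Euc d => if x ∈ A then c else x) (μ.restrict Aᶜ)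
        = Measure.map id (μ.restrict Aᶜ) := by
      refine Measure.map_congr ?_
      filter_upwards [ae_restrict_mem hA.compl] with x hx
      simp only [if_neg hx, id]
    rw [h1, Measure.map_id]

lemma sonj_map [IsFiniteMeasure μ] (lam : ℝ) {A : Set (Euc d)} (hA : MeasurableSet A)
    (hApos : 0 < μ A) {c : Euc d}
    (hcent : ∫ x, x ∂(μ.restrict A) = (μ A).toReal • c)
    (hid : MemLp (fun x : Euc d => x) 2 μ)
    {w : Euc d → Euc d} (hw : MemLp w 2 (Measure.map (fun x => if x ∈ A then c else x) μ)) :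
    SONJ μ lam (fun x => w (if x ∈ A then c else x))
      = SONJ (Measure.map (fun x => if x ∈ A then c else x) μ) lam w
        + ∫ x, ‖c - x‖ ^ 2 ∂(μ.restrict A) := by
  classical
  set T : Euc d → Euc d := fun x => if x ∈ A then c else x with hTdef
  have hT : Measurable T := Measurable.ite hA measurable_const measurable_id
  set ν := Measure.map T μ with hνdef
  have hν2 : ν = μ A • Measure.dirac c + μ.restrict Aᶜ := map_consolidate hA c
  haveI hνfin : IsFiniteMeasure ν := by
    refine ⟨?_⟩
    rw [hνdef, Measure.map_apply hT MeasurableSet.univ]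
    exact measure_lt_top μ _
  set ρ := μ.restrict A with hρ
  set σ := μ.restrict Aᶜ with hσ
  set aA := (μ A).toReal with haAdef
  show SONJ μ lam (fun x => w (T x)) = SONJ ν lam w + ∫ x, ‖c - x‖ ^ 2 ∂ρ
  have hwT : MemLp (fun x => w (T x)) 2 μ := memLp_comp_map hT hw
  have hwTi : Integrable (fun x => w (T x)) μ := hwT.integrable one_le_two
  have hwi : Integrable w ν := hw.integrable one_le_two
  have hidρ : MemLp (fun x : Euc d => x) 2 ρ := hid.restrict A
  have hqint : Integrable (fun x => ‖w (T x) - x‖ ^ 2) μ := normsq_integrable hwT hid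
  have hidν : MemLp (fun x : Euc d => x) 2 ν := by
    refine ⟨aestronglyMeasurable_id, ?_⟩
    have h2 := eLpNorm_map_measure (p := 2) (μ := μ) (f := T) (g := fun x : Euc d => x)
      aestronglyMeasurable_id hT.aemeasurable
    rw [← hνdef] at h2
    rw [h2]
    have hTm : MemLp T 2 μ := memLp_ite hA c hid
    exact hTm.2
  have hqintν : Integrable (fun z => ‖w z - z‖ ^ 2) ν := normsq_integrable hw hidν
  -- quadratic part
  have hquad : ∫ x, ‖w (T x) - x‖ ^ 2 ∂μ
      = ∫ z, ‖w z - z‖ ^ 2 ∂ν + ∫ x, ‖c - x‖ ^ 2 ∂ρ := by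
    have hL : ∫ x, ‖w (T x) - x‖ ^ 2 ∂μ
        = (aA * ‖w c - c‖ ^ 2 + ∫ x, ‖c - x‖ ^ 2 ∂ρ) + ∫ x, ‖w x - x‖ ^ 2 ∂σ := by
      have hsum : ρ + σ = μ := Measure.restrict_add_restrict_compl hA
      conv_lhs => rw [← hsum]
      rw [integral_add_measure hqint.restrict hqint.restrict]
      congr 1
      · have h1 : ∀ᵐ x ∂ρ, ‖w (T x) - x‖ ^ 2 = ‖w c - x‖ ^ 2 := by
          filter_upwards [ae_restrict_mem hA] with x hx
          rw [hTdef]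
          simp [hx]
        rw [integral_congr_ae h1, centroid_expansion hidρ hcent (w c)]
      · refine integral_congr_ae ?_
        filter_upwards [ae_restrict_mem hA.compl] with x hx
        have : T x = x := if_neg hx
        rw [this]
    have hR : ∫ z, ‖w z - z‖ ^ 2 ∂ν
        = aA * ‖w c - c‖ ^ 2 + ∫ x, ‖w x - x‖ ^ 2 ∂σ := by
      rw [hν2, integral_add_measure
        (hqintν.mono_measure (by rw [hν2]; exact Measure.le_add_right le_rfl))
        (hqintν.mono_measure (by rw [hν2]; exact Measure.le_add_left le_rfl)),
        integral_smul_measure, integral_dirac]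
      simp [smul_eq_mul, haAdef]
    rw [hL, hR]
    ring
  -- TV part
  have htv : ∫ x, ∫ y, ‖w (T x) - w (T y)‖ ∂μ ∂μ = ∫ x, ∫ y, ‖w x - w y‖ ∂ν ∂ν := by
    have hinner : ∀ z : Euc d, ∫ y, ‖w z - w y‖ ∂ν = ∫ y, ‖w z - w (T y)‖ ∂μ := by
      intro z
      rw [hνdef, integral_map hT.aemeasurable]
      exact (aestronglyMeasurable_const.sub hw.1).norm
    have houter : ∫ z, (∫ y, ‖w z - w (T y)‖ ∂μ) ∂ν
        = ∫ x, ∫ y, ‖w (T x) - w (T y)‖ ∂μ ∂μ := by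
      rw [hνdef, integral_map hT.aemeasurable]
      have hψ : Continuous (fun p : Euc d => ∫ y, ‖p - w (T y)‖ ∂μ) :=
        (psi_lipschitz hwTi).continuous
      exact (hψ.comp_aestronglyMeasurable hw.1)
    calc ∫ x, ∫ y, ‖w (T x) - w (T y)‖ ∂μ ∂μ
        = ∫ z, (∫ y, ‖w z - w (T y)‖ ∂μ) ∂ν := houter.symm
      _ = ∫ z, ∫ y, ‖w z - w y‖ ∂ν ∂ν := by
          refine integral_congr_ae (Eventually.of_forall fun z => ?_)
          show ∫ y, ‖w z - w (T y)‖ ∂μ = ∫ y, ‖w z - w y‖ ∂ν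
          exact (hinner z).symm
  unfold SONJ
  rw [hquad, htv]
  ring


end SONAux

open SONAux in
/-- **Proposition (consolidating a cohesive set).**  If `μ|_A` is `λ`-cohesive with
`μ(A) > 0`, and `u` consolidates `A` at its centroid `C_μ(A)` while fixing `Aᶜ`, then
for `μ`-a.e. `x`, `u_{μ,λ}(x) = u_{M_u(μ),λ}(u(x))`, where `M_u(μ)` is the pushforward
of `μ` under `u`. -/
theorem stmt12
    (d : ℕ) (μ : Measure (Euc d)) [IsFiniteMeasure μ] (hμ0 : μ ≠ 0)
    (hsupp : ∃ K : Set (Euc d), IsCompact K ∧ μ Kᶜ = 0)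
    (lam : ℝ) (hlam : 0 ≤ lam)
    (A : Set (Euc d)) (hA : MeasurableSet A) (hApos : 0 < μ A)
    (hcoh : Cohesive (μ.restrict A) lam)
    (umin vmin : Euc d → Euc d)
    (humin : IsSONMin μ lam umin)
    (hvmin : IsSONMin
      (Measure.map (fun x => if x ∈ A then muCentroid μ A else x) μ) lam vmin) :
    ∀ᵐ x ∂μ, umin x = vmin (if x ∈ A then muCentroid μ A else x) := by
  classical
  have haA : 0 < (μ A).toReal := ENNReal.toReal_pos hApos.ne' (measure_ne_top μ A)
  set c := muCentroid μ A with hcdef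
  have hc : c = (μ A).toReal⁻¹ • ∫ x in A, x ∂μ := by
    rw [hcdef, muCentroid, if_pos hApos]
  have hid : MemLp (fun x : Euc d => x) 2 μ := memLp_id hsupp
  have hcent : ∫ x, x ∂(μ.restrict A) = (μ A).toReal • c := by
    rw [hc, smul_smul, mul_inv_cancel₀ haA.ne', one_smul]
  set wbar : Euc d := (μ A).toReal⁻¹ • ∫ z in A, umin z ∂μ with hwbardef
  have hstep1 : umin =ᵐ[μ] fun x => if x ∈ A then wbar else umin x :=
    consolidate_on hlam hsupp hA hApos hcoh humin
  set vstar : Euc d → Euc d := fun x =>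
    @ite _ (x ∈ A ∪ {c}) (Classical.propDecidable _) wbar (umin x) with hvstardef
  have hstep2 : umin =ᵐ[μ] vstar := by
    by_cases hcA : c ∈ A
    · refine hstep1.trans (Eventually.of_forall fun x => ?_)
      by_cases hxA : x ∈ A
      · have hxS : x ∈ A ∪ {c} := Set.mem_union_left _ hxA
        simp [hvstardef, hxA, hxS]
      · have hxS : x ∉ A ∪ {c} := by
          intro h
          rcases h with h | h
          · exact hxA h
          · rw [Set.mem_singleton_iff] at h
            exact hxA (h ▸ hcA)
        have hxc : x ≠ c := fun h => hxA (h ▸ hcA)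
        simp [hvstardef, hxA, hxS, hxc]
    · by_cases hm0 : μ {c} = 0
      · refine hstep1.trans ?_
        have hne : ∀ᵐ x ∂μ, x ≠ c := by
          rw [ae_iff]
          refine measure_mono_null (fun x hx => ?_) hm0
          simpa using hx
        filter_upwards [hne] with x hx
        by_cases hxA : x ∈ A
        · have hxS : x ∈ A ∪ {c} := Set.mem_union_left _ hxA
          simp [hvstardef, hxA, hxS]
        · have hxS : x ∉ A ∪ {c} := by
            intro h
            rcases h with h | h
            · exact hxA h
            · exact hx h
          simp [hvstardef, hxA, hxS, hx]
      · have hmpos : 0 < μ {c} := lt_of_le_of_ne (by positivity) (Ne.symm hm0)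
        have hb1 : ∀ᵐ x ∂(μ.restrict A), umin x = wbar := by
          filter_upwards [ae_restrict_of_ae (s := A) hstep1, ae_restrict_mem hA]
            with x h1 h2
          rw [h1, if_pos h2]
        have hmc : umin c = wbar :=
          merge_atom hlam hsupp hA hApos hcA hmpos hcent humin hb1
        refine hstep1.trans (Eventually.of_forall fun x => ?_)
        by_cases hxA : x ∈ A
        · have hxS : x ∈ A ∪ {c} := Set.mem_union_left _ hxA
          simp [hvstardef, hxA, hxS]
        · by_cases hxc : x = c
          · have hxS : x ∈ A ∪ {c} := by
              rw [hxc]; exact Set.mem_union_right _ rfl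
            simp [hvstardef, hxA, hxS, hxc, hmc]
          · have hxS : x ∉ A ∪ {c} := by
              intro h
              rcases h with h | h
              · exact hxA h
              · exact hxc h
            simp [hvstardef, hxA, hxS, hxc]
  have hvstar2 : MemLp vstar 2 μ := by
    rw [hvstardef]
    exact memLp_ite (hA.union (measurableSet_singleton c)) wbar humin.1
  -- the consolidation map and pushforward
  set T : Euc d → Euc d := fun x => if x ∈ A then c else x with hTdef
  have hT : Measurable T := Measurable.ite hA measurable_const measurable_id
  set ν := Measure.map T μ with hνdef
  have hν2 : ν = μ A • Measure.dirac c + μ.restrict Aᶜ := map_consolidate hA c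
  haveI hνfin : IsFiniteMeasure ν := by
    refine ⟨?_⟩
    rw [hνdef, Measure.map_apply hT MeasurableSet.univ]
    exact measure_lt_top μ _
  have hsuppν : ∃ K : Set (Euc d), IsCompact K ∧ ν Kᶜ = 0 := by
    obtain ⟨K, hK, hKc⟩ := hsupp
    refine ⟨K ∪ {c}, hK.union isCompact_singleton, ?_⟩
    rw [hνdef, Measure.map_apply hT
      ((hK.isClosed.union isClosed_singleton).measurableSet.compl)]
    refine measure_mono_null (fun x hx => ?_) hKc
    simp only [Set.mem_preimage, Set.mem_compl_iff] at hx ⊢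
    intro hxK
    by_cases hxA : x ∈ A
    · exact hx (by rw [hTdef]; simp only [if_pos hxA]; exact Set.mem_union_right _ rfl)
    · exact hx (by rw [hTdef]; simp only [if_neg hxA]; exact Set.mem_union_left _ hxK)
  -- w₀
  set w0 : Euc d → Euc d := fun y =>
    @ite _ (y = c) (Classical.propDecidable _) wbar (umin y) with hw0def
  have hw0T : (fun x => w0 (T x)) = vstar := by
    funext x
    by_cases hxA : x ∈ A
    · have hTx : T x = c := by rw [hTdef]; exact if_pos hxA
      have hxS : x ∈ A ∪ {c} := Set.mem_union_left _ hxA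
      rw [hTx]
      simp [hw0def, hvstardef, hxS, hxA]
    · have hTx : T x = x := by rw [hTdef]; exact if_neg hxA
      rw [hTx]
      by_cases hxc : x = c
      · have hxS : x ∈ A ∪ {c} := by rw [hxc]; exact Set.mem_union_right _ rfl
        simp [hw0def, hvstardef, hxc, hxS, hxA]
      · have hxS : x ∉ A ∪ {c} := by
          intro h
          rcases h with h | h
          · exact hxA h
          · exact hxc h
        simp [hw0def, hvstardef, hxc, hxS, hxA]
  have haesm_w0 : AEStronglyMeasurable w0 ν := by
    obtain ⟨gu, hgum, hgu⟩ := humin.1.1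
    refine ⟨fun y => @ite _ (y = c) (Classical.propDecidable _) wbar (gu y),
      StronglyMeasurable.ite (measurableSet_eq) stronglyMeasurable_const hgum, ?_⟩
    rw [Filter.EventuallyEq, ae_iff]
    have hsub : {y | ¬ w0 y = @ite _ (y = c) (Classical.propDecidable _) wbar (gu y)}
        ⊆ {y | y ≠ c ∧ umin y ≠ gu y} := by
      intro y hy
      simp only [Set.mem_setOf_eq] at hy ⊢
      by_cases hyc : y = c
      · exfalso; apply hy; simp [hw0def, hyc]
      · refine ⟨hyc, fun hne => hy ?_⟩
        simp [hw0def, hyc, hne]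
    refine measure_mono_null hsub ?_
    rw [hν2, Measure.add_apply, Measure.smul_apply]
    have h1 : Measure.dirac c {y | y ≠ c ∧ umin y ≠ gu y} = 0 := by
      rw [Measure.dirac_apply]
      simp [Set.indicator_apply]
    have h2 : μ.restrict Aᶜ {y | y ≠ c ∧ umin y ≠ gu y} = 0 := by
      have h3 : μ {y | umin y ≠ gu y} = 0 := by
        rw [Filter.EventuallyEq, ae_iff] at hgu
        exact hgu
      have h4 := Measure.restrict_le_self (μ := μ) (s := Aᶜ)
        {y | y ≠ c ∧ umin y ≠ gu y}
      have h5 : μ {y | y ≠ c ∧ umin y ≠ gu y} = 0 :=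
        measure_mono_null (fun y hy => hy.2) h3
      exact le_antisymm (h5 ▸ h4) (by positivity)
    rw [h1, h2]
    simp
  have hw02 : MemLp w0 2 ν := by
    refine ⟨haesm_w0, ?_⟩
    have h2 := eLpNorm_map_measure (p := 2) (μ := μ) (f := T) haesm_w0 hT.aemeasurable
    rw [← hνdef] at h2
    rw [h2]
    have h3 : eLpNorm (w0 ∘ T) 2 μ = eLpNorm vstar 2 μ := by
      rw [show w0 ∘ T = vstar from hw0T]
    rw [h3]
    exact hvstar2.2
  -- w₀ is a minimizer over ν
  have humin_eq : umin =ᵐ[μ] fun x => w0 (T x) := by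
    rw [hw0T]
    exact hstep2
  have hKconst := hcent
  have hw0min : IsSONMin ν lam w0 := by
    refine ⟨hw02, fun w hw => ?_⟩
    have h1 := sonj_map lam hA hApos hKconst hid (w := w0) (by rw [← hTdef, ← hνdef]; exact hw02)
    have h2 := sonj_map lam hA hApos hKconst hid (w := w) (by rw [← hTdef, ← hνdef]; exact hw)
    rw [← hTdef, ← hνdef] at h1 h2
    have h3 : SONJ μ lam (fun x => w0 (T x)) = SONJ μ lam umin :=
      (sonj_congr lam humin_eq).symm
    have h4 : SONJ μ lam umin ≤ SONJ μ lam (fun x => w (T x)) :=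
      humin.2 _ (memLp_comp_map hT hw)
    linarith [h1, h2, h3, h4]
  have hfin : w0 =ᵐ[ν] vmin := sonmin_unique hlam hsuppν hw0min hvmin
  have hfin2 : ∀ᵐ x ∂μ, w0 (T x) = vmin (T x) := by
    have hfin' : ∀ᵐ y ∂(Measure.map T μ), w0 y = vmin y := by
      rw [← hνdef]
      exact hfin
    exact ae_of_ae_map (p := fun y => w0 y = vmin y) hT.aemeasurable hfin'
  filter_upwards [hstep2, hfin2] with x h1 h2
  have h3 : vstar x = w0 (T x) := by rw [← hw0T]
  rw [h1, h3, h2]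
end
end

section
/- (Two points) Let x₀, x₁ ∈ ℝ^d with x₀ ≠ x₁, let a₀, a₁ > 0, and let μ = a₀·δ_{x₀} + a₁·δ_{x₁}. Then λ₁(μ) = λ_*(μ) = |x₁ − x₀|/(a₀ + a₁). -/
open MeasureTheory Filter Topology ProbabilityTheory
open scoped ENNReal NNReal symmDiff Classical RealInnerProductSpace

noncomputable section

section TwoPointHelpers

variable {d : ℕ}

private lemma lowerA (x₀ x₁ : Euc d) (hne : x₀ ≠ x₁) (a₀ a₁ lam : ℝ)
    (h₀ : 0 < a₀) (h₁ : 0 < a₁) (hlam : 0 ≤ lam) (p q : Euc d) :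
    2*lam*a₀*a₁*‖x₁ - x₀‖ - lam^2*a₀*a₁*(a₀+a₁) ≤
      a₀*‖p-x₀‖^2 + a₁*‖q-x₁‖^2 + lam*(2*a₀*a₁*‖p-q‖) := by
  set D := ‖x₁ - x₀‖ with hDdef
  have hx : x₁ - x₀ ≠ 0 := sub_ne_zero.mpr (Ne.symm hne)
  have hD : 0 < D := norm_pos_iff.mpr hx
  set w : Euc d := D⁻¹ • (x₁ - x₀) with hw
  have hwn : ‖w‖ = 1 := by
    rw [hw, norm_smul, norm_inv, Real.norm_eq_abs, abs_of_pos hD]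
    exact inv_mul_cancel₀ hD.ne'
  set s := ⟪p - x₀, w⟫ with hs
  set t := ⟪x₁ - q, w⟫ with ht
  have hs2 : s ^ 2 ≤ ‖p - x₀‖ ^ 2 := by
    have h := abs_real_inner_le_norm (p - x₀) w
    rw [hwn, mul_one] at h
    calc s^2 = |s|^2 := (sq_abs s).symm
    _ ≤ ‖p - x₀‖^2 := pow_le_pow_left₀ (abs_nonneg _) h 2
  have ht2 : t ^ 2 ≤ ‖q - x₁‖ ^ 2 := by
    have h := abs_real_inner_le_norm (x₁ - q) w
    rw [hwn, mul_one, norm_sub_rev] at h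
    calc t^2 = |t|^2 := (sq_abs t).symm
    _ ≤ ‖q - x₁‖^2 := pow_le_pow_left₀ (abs_nonneg _) h 2
  have hDw : ⟪x₁ - x₀, w⟫ = D := by
    rw [hw, real_inner_smul_right, real_inner_self_eq_norm_sq]
    field_simp [hDdef]
    ring
  have hqp : D - s - t ≤ ‖p - q‖ := by
    have h := real_inner_le_norm (q - p) w
    rw [hwn, mul_one] at h
    have hqpe : ⟪q - p, w⟫ = D - s - t := by
      have hid : q - p = (x₁ - x₀) - (p - x₀) - (x₁ - q) := by abel
      rw [hid, inner_sub_left, inner_sub_left, hDw]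
    rw [hqpe] at h
    calc D - s - t ≤ ‖q - p‖ := h
    _ = ‖p - q‖ := norm_sub_rev _ _
  nlinarith [mul_le_mul_of_nonneg_left hs2 h₀.le, mul_le_mul_of_nonneg_left ht2 h₁.le,
    mul_nonneg h₀.le (sq_nonneg (s - lam*a₁)), mul_nonneg h₁.le (sq_nonneg (t - lam*a₀)),
    mul_nonneg (mul_nonneg (mul_nonneg hlam h₀.le) h₁.le) (sub_nonneg.mpr hqp)]

private lemma onePoint (x₀ x₁ : Euc d) (hne : x₀ ≠ x₁) (a₀ a₁ : ℝ)
    (h₀ : 0 < a₀) (h₁ : 0 < a₁) (c : Euc d) :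
    a₀*a₁*‖x₁ - x₀‖^2 ≤ (a₀*‖c-x₀‖^2 + a₁*‖c-x₁‖^2) * (a₀+a₁) := by
  set D := ‖x₁ - x₀‖ with hDdef
  have hx : x₁ - x₀ ≠ 0 := sub_ne_zero.mpr (Ne.symm hne)
  have hD : 0 < D := norm_pos_iff.mpr hx
  set w : Euc d := D⁻¹ • (x₁ - x₀) with hw
  have hwn : ‖w‖ = 1 := by
    rw [hw, norm_smul, norm_inv, Real.norm_eq_abs, abs_of_pos hD]
    exact inv_mul_cancel₀ hD.ne'
  set s := ⟪c - x₀, w⟫ with hs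
  set t := ⟪x₁ - c, w⟫ with ht
  have hs2 : s ^ 2 ≤ ‖c - x₀‖ ^ 2 := by
    have h := abs_real_inner_le_norm (c - x₀) w
    rw [hwn, mul_one] at h
    calc s^2 = |s|^2 := (sq_abs s).symm
    _ ≤ ‖c - x₀‖^2 := pow_le_pow_left₀ (abs_nonneg _) h 2
  have ht2 : t ^ 2 ≤ ‖c - x₁‖ ^ 2 := by
    have h := abs_real_inner_le_norm (x₁ - c) w
    rw [hwn, mul_one, norm_sub_rev] at h
    calc t^2 = |t|^2 := (sq_abs t).symm
    _ ≤ ‖c - x₁‖^2 := pow_le_pow_left₀ (abs_nonneg _) h 2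
  have hDw : ⟪x₁ - x₀, w⟫ = D := by
    rw [hw, real_inner_smul_right, real_inner_self_eq_norm_sq]
    field_simp [hDdef]
    ring
  have hst : s + t = D := by
    have hid : x₁ - x₀ = (c - x₀) + (x₁ - c) := by abel
    rw [hid, inner_add_left] at hDw
    exact hDw
  have hXA := mul_le_mul_of_nonneg_right
    (add_le_add (mul_le_mul_of_nonneg_left hs2 h₀.le) (mul_le_mul_of_nonneg_left ht2 h₁.le))
    (by positivity : (0:ℝ) ≤ a₀+a₁)
  have hkey : a₀*a₁*D^2 = a₀*a₁*(s+t)^2 := by rw [hst]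
  nlinarith [hXA, sq_nonneg (a₀*s - a₁*t), hkey]

private lemma centroidEq (x₀ x₁ : Euc d) (a₀ a₁ : ℝ)
    (h₀ : 0 < a₀) (h₁ : 0 < a₁) :
    (a₀*‖((a₀+a₁)⁻¹ • (a₀ • x₀ + a₁ • x₁))-x₀‖^2 +
     a₁*‖((a₀+a₁)⁻¹ • (a₀ • x₀ + a₁ • x₁))-x₁‖^2) * (a₀+a₁) = a₀*a₁*‖x₁ - x₀‖^2 := by
  have hA : a₀ + a₁ ≠ 0 := by positivity
  set c₀ : Euc d := (a₀+a₁)⁻¹ • (a₀ • x₀ + a₁ • x₁) with hc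
  have h1 : c₀ - x₀ = ((a₀+a₁)⁻¹ * a₁) • (x₁ - x₀) := by
    rw [hc]; match_scalars <;> field_simp <;> ring
  have h2 : c₀ - x₁ = ((a₀+a₁)⁻¹ * a₀) • (x₀ - x₁) := by
    rw [hc]; match_scalars <;> field_simp <;> ring
  rw [h1, h2, norm_smul, norm_smul, Real.norm_eq_abs,
    abs_of_pos (by positivity), Real.norm_eq_abs, abs_of_pos (by positivity),
    norm_sub_rev x₀ x₁]
  field_simp
  ring

private lemma starval (x₀ x₁ : Euc d) (hne : x₀ ≠ x₁) (a₀ a₁ lam : ℝ)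
    (h₀ : 0 < a₀) (h₁ : 0 < a₁) (hlam : 0 ≤ lam) (hle : lam*(a₀+a₁) ≤ ‖x₁-x₀‖) :
    a₀*‖(x₀ + (lam*a₁) • (‖x₁-x₀‖⁻¹ • (x₁-x₀))) - x₀‖^2
    + a₁*‖(x₁ - (lam*a₀) • (‖x₁-x₀‖⁻¹ • (x₁-x₀))) - x₁‖^2
    + lam*(2*a₀*a₁*‖(x₀ + (lam*a₁) • (‖x₁-x₀‖⁻¹ • (x₁-x₀)))
        - (x₁ - (lam*a₀) • (‖x₁-x₀‖⁻¹ • (x₁-x₀)))‖)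
    = 2*lam*a₀*a₁*‖x₁-x₀‖ - lam^2*a₀*a₁*(a₀+a₁) := by
  have hx : x₁ - x₀ ≠ 0 := sub_ne_zero.mpr (Ne.symm hne)
  set D := ‖x₁ - x₀‖ with hDdef
  have hD : 0 < D := norm_pos_iff.mpr hx
  have e1' : (x₀ + (lam*a₁) • (D⁻¹ • (x₁-x₀))) - x₀ = (lam*a₁*D⁻¹) • (x₁-x₀) := by
    module
  have e2' : (x₁ - (lam*a₀) • (D⁻¹ • (x₁-x₀))) - x₁ = (-(lam*a₀*D⁻¹)) • (x₁-x₀) := by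
    module
  have e3' : (x₀ + (lam*a₁) • (D⁻¹ • (x₁-x₀))) - (x₁ - (lam*a₀) • (D⁻¹ • (x₁-x₀)))
      = (lam*(a₀+a₁)*D⁻¹ - 1) • (x₁-x₀) := by
    module
  rw [e1', e2', e3', norm_smul, norm_smul, norm_smul]
  rw [Real.norm_eq_abs, Real.norm_eq_abs, Real.norm_eq_abs]
  have hinvD : D⁻¹ * D = 1 := inv_mul_cancel₀ hD.ne'
  have ha1 : |lam*a₁*D⁻¹| = lam*a₁*D⁻¹ := abs_of_nonneg (by positivity)
  have ha2 : |(-(lam*a₀*D⁻¹))| = lam*a₀*D⁻¹ := by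
    rw [abs_neg]; exact abs_of_nonneg (by positivity)
  have ha3 : |lam*(a₀+a₁)*D⁻¹ - 1| = 1 - lam*(a₀+a₁)*D⁻¹ := by
    have hnp : lam*(a₀+a₁)*D⁻¹ - 1 ≤ 0 := by
      have h := mul_le_mul_of_nonneg_right hle (inv_pos.mpr hD).le
      nlinarith [hinvD]
    rw [abs_of_nonpos hnp]
    ring
  rw [ha1, ha2, ha3]
  field_simp
  ring

variable {x₀ x₁ : Euc d} {a₀ a₁ : ℝ} {μ : Measure (Euc d)}

private lemma two_finite (h₀ : 0 < a₀) (h₁ : 0 < a₁)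
    (hμ : μ = ENNReal.ofReal a₀ • Measure.dirac x₀ + ENNReal.ofReal a₁ • Measure.dirac x₁) :
    IsFiniteMeasure μ := by
  subst hμ
  constructor
  simp only [Measure.add_apply, Measure.smul_apply, smul_eq_mul, Measure.dirac_apply_of_mem
    (Set.mem_univ _), mul_one]
  exact ENNReal.add_lt_top.mpr ⟨ENNReal.ofReal_lt_top, ENNReal.ofReal_lt_top⟩

private lemma integrable_two_smul_dirac {E : Type*} [NormedAddCommGroup E]
    (f : Euc d → E) (y : Euc d) (c : ℝ) :
    Integrable f (ENNReal.ofReal c • Measure.dirac y) := by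
  have hae : f =ᵐ[Measure.dirac y] fun _ => f y := by
    rw [ae_dirac_eq]
    exact Filter.eventually_pure.mpr rfl
  have h1 : Integrable f (Measure.dirac y) := (integrable_const (f y)).congr hae.symm
  exact h1.smul_measure ENNReal.ofReal_ne_top

private lemma integral_two {E : Type*} [NormedAddCommGroup E] [NormedSpace ℝ E]
    [CompleteSpace E] (h₀ : 0 ≤ a₀) (h₁ : 0 ≤ a₁)
    (hμ : μ = ENNReal.ofReal a₀ • Measure.dirac x₀ + ENNReal.ofReal a₁ • Measure.dirac x₁)
    (f : Euc d → E) : ∫ x, f x ∂μ = a₀ • f x₀ + a₁ • f x₁ := by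
  subst hμ
  rw [integral_add_measure (integrable_two_smul_dirac f x₀ a₀) (integrable_two_smul_dirac f x₁ a₁),
    integral_smul_measure, integral_smul_measure, integral_dirac, integral_dirac,
    ENNReal.toReal_ofReal h₀, ENNReal.toReal_ofReal h₁]

private lemma ae_two (h₀ : 0 < a₀) (h₁ : 0 < a₁)
    (hμ : μ = ENNReal.ofReal a₀ • Measure.dirac x₀ + ENNReal.ofReal a₁ • Measure.dirac x₁)
    {P : Euc d → Prop} : (∀ᵐ z ∂μ, P z) ↔ P x₀ ∧ P x₁ := by
  subst hμ
  rw [ae_add_measure_iff,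
    Measure.ae_ennreal_smul_measure_iff (by simp [ENNReal.ofReal_eq_zero]; linarith),
    Measure.ae_ennreal_smul_measure_iff (by simp [ENNReal.ofReal_eq_zero]; linarith),
    ae_dirac_eq, ae_dirac_eq]
  simp

private lemma memL2_two (hne : x₀ ≠ x₁) (h₀ : 0 < a₀) (h₁ : 0 < a₁)
    (hμ : μ = ENNReal.ofReal a₀ • Measure.dirac x₀ + ENNReal.ofReal a₁ • Measure.dirac x₁)
    (f : Euc d → Euc d) : MemLp f 2 μ := by
  haveI := two_finite h₀ h₁ hμ
  set g : Euc d → Euc d := fun z => if z = x₀ then f x₀ else f x₁ with hg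
  have hgm : Measurable g := by
    apply Measurable.ite (by simp [measurableSet_eq]) measurable_const measurable_const
  have hgb : ∀ z, ‖g z‖ ≤ max ‖f x₀‖ ‖f x₁‖ := by
    intro z
    by_cases h : z = x₀ <;> simp [hg, h, le_max_left, le_max_right]
  have hmg : MemLp g 2 μ :=
    MemLp.of_bound hgm.aestronglyMeasurable _ (ae_of_all _ hgb)
  have hgf : ∀ᵐ z ∂μ, g z = f z :=
    (ae_two h₀ h₁ hμ).mpr ⟨by simp [hg], by simp [hg, hne.symm]⟩
  exact hmg.ae_eq hgf

private lemma SONJ_two (hne : x₀ ≠ x₁) (h₀ : 0 < a₀) (h₁ : 0 < a₁)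
    (hμ : μ = ENNReal.ofReal a₀ • Measure.dirac x₀ + ENNReal.ofReal a₁ • Measure.dirac x₁)
    (lam : ℝ) (u : Euc d → Euc d) :
    SONJ μ lam u = a₀*‖u x₀ - x₀‖^2 + a₁*‖u x₁ - x₁‖^2
      + lam*(2*a₀*a₁*‖u x₀ - u x₁‖) := by
  unfold SONJ
  rw [integral_two h₀.le h₁.le hμ (fun x => ‖u x - x‖^2),
    integral_two h₀.le h₁.le hμ (fun x => ∫ y, ‖u x - u y‖ ∂μ),
    integral_two h₀.le h₁.le hμ (fun y => ‖u x₀ - u y‖),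
    integral_two h₀.le h₁.le hμ (fun y => ‖u x₁ - u y‖)]
  simp only [smul_eq_mul, sub_self, norm_zero]
  rw [norm_sub_rev (u x₁) (u x₀)]
  ring

private lemma isMin_iff (hne : x₀ ≠ x₁) (h₀ : 0 < a₀) (h₁ : 0 < a₁)
    (hμ : μ = ENNReal.ofReal a₀ • Measure.dirac x₀ + ENNReal.ofReal a₁ • Measure.dirac x₁)
    (lam : ℝ) (u : Euc d → Euc d) :
    IsSONMin μ lam u ↔ ∀ p q : Euc d,
      a₀*‖u x₀ - x₀‖^2 + a₁*‖u x₁ - x₁‖^2 + lam*(2*a₀*a₁*‖u x₀ - u x₁‖) ≤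
      a₀*‖p - x₀‖^2 + a₁*‖q - x₁‖^2 + lam*(2*a₀*a₁*‖p - q‖) := by
  constructor
  · rintro ⟨-, hmin⟩ p q
    classical
    set v : Euc d → Euc d := fun z => if z = x₀ then p else q with hv
    have h := hmin v (memL2_two hne h₀ h₁ hμ v)
    rw [SONJ_two hne h₀ h₁ hμ lam u, SONJ_two hne h₀ h₁ hμ lam v] at h
    have hv0 : v x₀ = p := by simp [hv]
    have hv1 : v x₁ = q := by simp [hv, hne.symm]
    rwa [hv0, hv1] at h
  · intro h
    refine ⟨memL2_two hne h₀ h₁ hμ u, fun v hv => ?_⟩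
    rw [SONJ_two hne h₀ h₁ hμ lam u, SONJ_two hne h₀ h₁ hμ lam v]
    exact h (v x₀) (v x₁)

end TwoPointHelpers

set_option maxHeartbeats 2000000 in
/-- **Proposition (two points).**  For `μ = a₀ δ_{x₀} + a₁ δ_{x₁}` with `x₀ ≠ x₁` and
`a₀, a₁ > 0`, one has `λ₁(μ) = λ⋆(μ) = |x₁ - x₀| / (a₀ + a₁)`. -/
theorem stmt13
    (d : ℕ) (x₀ x₁ : Euc d) (hne : x₀ ≠ x₁) (a₀ a₁ : ℝ) (h₀ : 0 < a₀) (h₁ : 0 < a₁)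
    (μ : Measure (Euc d))
    (hμ : μ = ENNReal.ofReal a₀ • Measure.dirac x₀ + ENNReal.ofReal a₁ • Measure.dirac x₁) :
    lambda1 μ = ‖x₁ - x₀‖ / (a₀ + a₁) ∧ lambdaStar μ = ‖x₁ - x₀‖ / (a₀ + a₁) := by
  have hx : x₁ - x₀ ≠ 0 := sub_ne_zero.mpr (Ne.symm hne)
  set D := ‖x₁ - x₀‖ with hDdef
  have hD : 0 < D := norm_pos_iff.mpr hx
  set A := a₀ + a₁ with hA
  have hApos : 0 < A := by positivity
  have hthr : 0 < D / A := by positivity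
  set w : Euc d := D⁻¹ • (x₁ - x₀) with hw
  -- base lower bound at the threshold value
  have hbase : ∀ p q : Euc d,
      a₀*a₁*D^2/A ≤ a₀*‖p-x₀‖^2 + a₁*‖q-x₁‖^2 + (D/A)*(2*a₀*a₁*‖p-q‖) := by
    intro p q
    have h := lowerA x₀ x₁ hne a₀ a₁ (D/A) h₀ h₁ hthr.le p q
    have he : 2*(D/A)*a₀*a₁*D - (D/A)^2*a₀*a₁*A = a₀*a₁*D^2/A := by
      field_simp
      ring
    rw [← hDdef, ← hA, he] at h
    exact h
  -- centroid
  set c₀ : Euc d := A⁻¹ • (a₀ • x₀ + a₁ • x₁) with hc₀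
  have hL : a₀*‖c₀-x₀‖^2 + a₁*‖c₀-x₁‖^2 = a₀*a₁*D^2/A := by
    rw [eq_div_iff hApos.ne']
    exact centroidEq x₀ x₁ a₀ a₁ h₀ h₁
  -- cohesive for lam ≥ thr
  have hcoh : ∀ lam : ℝ, D/A ≤ lam → Cohesive μ lam := by
    intro lam hlam
    refine ⟨fun _ => c₀, ?_, c₀, Filter.EventuallyEq.refl _ _⟩
    rw [isMin_iff hne h₀ h₁ hμ lam]
    intro p q
    have h1 := hbase p q
    have h2 : (D/A)*(2*a₀*a₁*‖p-q‖) ≤ lam*(2*a₀*a₁*‖p-q‖) :=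
      mul_le_mul_of_nonneg_right hlam (by positivity)
    simp only [sub_self, norm_zero, mul_zero]
    rw [hL]
    linarith
  -- cohesive implies lam ≥ thr
  have hcoh_ge : ∀ lam : ℝ, 0 ≤ lam → Cohesive μ lam → D/A ≤ lam := by
    intro lam hlam0 hC
    by_contra hlt
    push_neg at hlt
    have hlaD : lam * A < D := by
      rw [← lt_div_iff₀ hApos] at *
      exact hlt
    obtain ⟨u, hmin, c, hc⟩ := hC
    obtain ⟨hu0, hu1⟩ := (ae_two h₀ h₁ hμ).mp hc
    have hu0' : u x₀ = c := hu0
    have hu1' : u x₁ = c := hu1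
    have hch := (isMin_iff hne h₀ h₁ hμ lam u).mp hmin
      (x₀ + (lam*a₁) • (D⁻¹ • (x₁-x₀))) (x₁ - (lam*a₀) • (D⁻¹ • (x₁-x₀)))
    rw [hu0', hu1'] at hch
    simp only [sub_self, norm_zero, mul_zero, add_zero] at hch
    have hsv := starval x₀ x₁ hne a₀ a₁ lam h₀ h₁ hlam0 (by rw [← hDdef, ← hA]; linarith)
    rw [← hDdef, ← hA] at hsv
    rw [hsv] at hch
    have hop := onePoint x₀ x₁ hne a₀ a₁ h₀ h₁ c
    rw [← hDdef, ← hA] at hop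
    nlinarith [mul_pos (mul_pos h₀ h₁) (sq_pos_of_ne_zero (by nlinarith : D - lam*A ≠ 0)),
      mul_le_mul_of_nonneg_right hch hApos.le, hop, hApos]
  -- shattered for 0 ≤ lam with lam*A < D
  have hsh : ∀ lam : ℝ, 0 ≤ lam → lam * A < D → Shattered μ lam := by
    intro lam hlam0 hlaD
    set pstar : Euc d := x₀ + (lam*a₁) • (D⁻¹ • (x₁-x₀)) with hp
    set v : Euc d → Euc d := fun z => pstar + ((D - lam*A)/D) • (z - x₀) with hvdef
    have hv0 : v x₀ = pstar := by simp [hvdef]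
    have hv1 : v x₁ = x₁ - (lam*a₀) • (D⁻¹ • (x₁-x₀)) := by
      rw [hvdef]
      simp only [hp, hA]
      match_scalars <;> field_simp [hD.ne'] <;> ring
    have hcc : (0:ℝ) < (D - lam*A)/D := by
      apply div_pos _ hD
      linarith
    refine ⟨v, ?_, v, ?_, ?_, Filter.EventuallyEq.refl _ _⟩
    · rw [isMin_iff hne h₀ h₁ hμ lam]
      intro p q
      rw [hv0, hv1]
      have hsv := starval x₀ x₁ hne a₀ a₁ lam h₀ h₁ hlam0 (by rw [← hDdef, ← hA]; linarith)
      rw [← hDdef, ← hA] at hsv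
      rw [show pstar = x₀ + (lam*a₁) • (D⁻¹ • (x₁-x₀)) from hp, hsv]
      have h := lowerA x₀ x₁ hne a₀ a₁ lam h₀ h₁ hlam0 p q
      rw [← hDdef, ← hA] at h
      exact h
    · apply Continuous.measurable
      exact continuous_const.add (by fun_prop)
    · intro z₁ z₂ hz
      simp only [hvdef] at hz
      have := add_left_cancel hz
      have h2 := smul_right_injective (Euc d) hcc.ne' this
      exact sub_left_injective h2
  -- shattered implies lam ≤ thr
  have hsh_le : ∀ lam : ℝ, 0 ≤ lam → Shattered μ lam → lam ≤ D/A := by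
    intro lam hlam0 hS
    by_contra hlt
    push_neg at hlt
    obtain ⟨u, hmin, v, hvm, hvinj, huv⟩ := hS
    obtain ⟨hu0, hu1⟩ := (ae_two h₀ h₁ hμ).mp huv
    have hune : u x₀ ≠ u x₁ := by
      rw [hu0, hu1]
      exact fun h => hne (hvinj h)
    have hrpos : 0 < ‖u x₀ - u x₁‖ := norm_pos_iff.mpr (sub_ne_zero.mpr hune)
    have hch := (isMin_iff hne h₀ h₁ hμ lam u).mp hmin c₀ c₀
    simp only [sub_self, norm_zero, mul_zero, add_zero] at hch
    rw [hL] at hch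
    have hb := hbase (u x₀) (u x₁)
    have hsplit : lam*(2*a₀*a₁*‖u x₀ - u x₁‖) = (D/A)*(2*a₀*a₁*‖u x₀ - u x₁‖)
        + (lam - D/A)*(2*a₀*a₁*‖u x₀ - u x₁‖) := by ring
    nlinarith [mul_pos (sub_pos.mpr hlt) (by positivity : (0:ℝ) < 2*a₀*a₁*‖u x₀ - u x₁‖)]
  constructor
  · -- lambda1
    have hleast : IsLeast {lam : ℝ | 0 ≤ lam ∧ Cohesive μ lam} (D/A) :=
      ⟨⟨hthr.le, hcoh _ le_rfl⟩, fun x hx => hcoh_ge x hx.1 hx.2⟩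
    rw [lambda1, hleast.csInf_eq, hDdef, hA]
  · -- lambdaStar
    have h0mem : (0:ℝ) ∈ {lam : ℝ | 0 ≤ lam ∧ Shattered μ lam} :=
      ⟨le_rfl, hsh 0 le_rfl (by simpa using hD)⟩
    have hub : ∀ x ∈ {lam : ℝ | 0 ≤ lam ∧ Shattered μ lam}, x ≤ D/A :=
      fun x hx => hsh_le x hx.1 hx.2
    have hbdd : BddAbove {lam : ℝ | 0 ≤ lam ∧ Shattered μ lam} := ⟨D/A, hub⟩
    rw [lambdaStar]
    rw [show ‖x₁ - x₀‖ / (a₀ + a₁) = D/A from rfl]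
    apply le_antisymm
    · exact csSup_le ⟨0, h0mem⟩ hub
    · apply le_of_forall_lt
      intro c hc
      rcases lt_or_ge c 0 with h | h
      · exact lt_of_lt_of_le h (le_csSup hbdd h0mem)
      · have hm : (c + D/A)/2 ∈ {lam : ℝ | 0 ≤ lam ∧ Shattered μ lam} := by
          refine ⟨by linarith, hsh _ (by linarith) ?_⟩
          have hcA : c * A < D := (lt_div_iff₀ hApos).mp hc
          have hDA : D/A*A = D := div_mul_cancel₀ _ hApos.ne'
          nlinarith
        exact lt_of_lt_of_le (by linarith) (le_csSup hbdd hm)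
end
end
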